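/- arXiv:1208.1607 — 6 statements merged into one kernel-verified Lean document; each statement's English description precedes it below -/
import Mathlib

section
/- Let m ≥ 2 and let A be an mth order 2-dimensional complex tensor. Let C = (C_i^j) be a real orthogonal 2×2 matrix (C C^T = I), and define the transformed tensor à by ã_{i_1...i_m} = Σ_{j_1,...,j_m} C_{i_1}^{j_1}···C_{i_m}^{j_m} a_{j_1...j_m}, with associated binary forms F̃_1, F̃_2 of degree m−1. Then Res(F̃_1, F̃_2) = Res(F_1, F_2). -/
open Finset

noncomputable section

/-- `(A x^{m-1})_i` for an `m`th order `n`-dimensional tensor; the tensor is given with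
its first index separated: `A i g` is the entry `a_{i, g 1, ..., g (m-1)}`. -/
def tApply {R : Type*} [CommRing R] {m1 n : ℕ} (A : Fin n → (Fin m1 → Fin n) → R)
    (x : Fin n → R) (i : Fin n) : R :=
  ∑ g : Fin m1 → Fin n, A i g * ∏ j, x (g j)

/-- `x^T x = ∑ i, x i ^ 2`. -/
def dotSq {R : Type*} [CommRing R] {n : ℕ} (x : Fin n → R) : R := ∑ i, x i ^ 2

/-- A tensor is regular if the system `A x^{m-1} = 0, x^T x = 0` has no nonzero solution. -/
def Regular {m1 n : ℕ} (A : Fin n → (Fin m1 → Fin n) → ℂ) : Prop :=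
  ¬∃ x : Fin n → ℂ, x ≠ 0 ∧ (∀ i, tApply A x i = 0) ∧ dotSq x = 0

/-- For `n = 2`: `bCoeff A 0 i = b_{i+1}` and `bCoeff A 1 i = c_{i+1}`, i.e. the coefficient
of `x₁^{m-1-i} x₂^i` in the binary form `F_{i0+1}(x) = (A x^{m-1})_{i0+1}`. -/
def bCoeff {R : Type*} [CommRing R] {m1 : ℕ} (A : Fin 2 → (Fin m1 → Fin 2) → R)
    (i0 : Fin 2) (i : ℕ) : R :=
  ∑ g ∈ univ.filter (fun g : Fin m1 → Fin 2 => (univ.filter fun k => g k = 1).card = i), A i0 g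

/-- The Sylvester matrix of binary forms of degrees `d` and `e` with coefficient
sequences `f` and `g` (`f i` is the coefficient of `x₁^{d-i} x₂^i`, similarly `g`):
the first `e` rows are shifted copies of `(f 0, ..., f d)`, the last `d` rows are
shifted copies of `(g 0, ..., g e)`. -/
def sylM {R : Type*} [CommRing R] (d e : ℕ) (f g : ℕ → R) :
    Matrix (Fin (d + e)) (Fin (d + e)) R := fun i j =>
  if (i : ℕ) < e then
    (if (i : ℕ) ≤ (j : ℕ) ∧ (j : ℕ) ≤ (i : ℕ) + d then f ((j : ℕ) - (i : ℕ)) else 0)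
  else
    (if (i : ℕ) - e ≤ (j : ℕ) ∧ (j : ℕ) ≤ ((i : ℕ) - e) + e then g ((j : ℕ) - ((i : ℕ) - e)) else 0)

/-- The resultant of binary forms of degrees `d` and `e`. -/
def Res {R : Type*} [CommRing R] (d e : ℕ) (f g : ℕ → R) : R := (sylM d e f g).det

open MvPolynomial


noncomputable section

-- the exponent finsupp for the monomial x0^(k-j) x1^j
def fm (k j : ℕ) : Fin 2 →₀ ℕ := Finsupp.single 0 (k - j) + Finsupp.single 1 j

lemma fm_apply0 (k j : ℕ) : fm k j 0 = k - j := by simp [fm]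
lemma fm_apply1 (k j : ℕ) : fm k j 1 = j := by simp [fm]

lemma fm_eq_iff (k k' i j : ℕ) : fm k i = fm k' j ↔ (k - i = k' - j ∧ i = j) := by
  constructor
  · intro h
    constructor
    · have := DFunLike.congr_fun h 0
      simpa [fm_apply0] using this
    · have := DFunLike.congr_fun h 1
      simpa [fm_apply1] using this
  · rintro ⟨h1, h2⟩
    ext t
    match t with
    | 0 => simpa [fm_apply0] using h1
    | 1 => simpa [fm_apply1] using h2

lemma fm_degree {k j : ℕ} (h : j ≤ k) : (fm k j).degree = k := by
  have : (fm k j).degree = ∑ t : Fin 2, fm k j t := by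
    rw [Finsupp.degree]
    exact Finset.sum_subset (Finset.subset_univ _)
      (fun x _ hx => Finsupp.notMem_support_iff.mp hx)
  rw [this, Fin.sum_univ_two, fm_apply0, fm_apply1]
  omega

lemma degree_fin2 (m : Fin 2 →₀ ℕ) : m.degree = m 0 + m 1 := by
  have : m.degree = ∑ t : Fin 2, m t := by
    rw [Finsupp.degree]
    exact Finset.sum_subset (Finset.subset_univ _)
      (fun x _ hx => Finsupp.notMem_support_iff.mp hx)
  rw [this, Fin.sum_univ_two]

-- coefficient vector (as ℕ-indexed function) of a binary form of degree k
def cvec (k : ℕ) (P : MvPolynomial (Fin 2) ℂ) (j : ℕ) : ℂ := coeff (fm k j) P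

-- the binary form of degree k with coefficient function f
def toPoly (k : ℕ) (f : ℕ → ℂ) : MvPolynomial (Fin 2) ℂ :=
  ∑ j ∈ range (k + 1), monomial (fm k j) (f j)

lemma monomial_fm (k i : ℕ) (c : ℂ) :
    monomial (fm k i) c = C c * X 0 ^ (k - i) * X 1 ^ i := by
  rw [X_pow_eq_monomial, X_pow_eq_monomial, ← monomial_zero' (R := ℂ)]
  rw [monomial_mul, monomial_mul]
  simp [fm]

lemma cvec_monomial_fm (k i j : ℕ) (c : ℂ) :
    cvec k (monomial (fm k i) c) j = if i = j then c else 0 := by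
  rw [cvec, coeff_monomial]
  by_cases h : i = j
  · subst h; simp
  · rw [if_neg, if_neg h]
    intro hc
    exact h ((fm_eq_iff k k i j).mp hc).2

lemma cvec_toPoly (k : ℕ) (f : ℕ → ℂ) {j : ℕ} (hj : j ≤ k) :
    cvec k (toPoly k f) j = f j := by
  unfold toPoly cvec
  rw [MvPolynomial.coeff_sum]
  rw [Finset.sum_eq_single j]
  · have := cvec_monomial_fm k j j (f j)
    rw [cvec] at this
    rw [this, if_pos rfl]
  · intro b _ hb
    have := cvec_monomial_fm k b j (f b)
    rw [cvec] at this
    rw [this, if_neg hb]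
  · intro h
    exact absurd (Finset.mem_range.mpr (by omega)) h

lemma toPoly_isHomogeneous (k : ℕ) (f : ℕ → ℂ) : (toPoly k f).IsHomogeneous k := by
  apply IsHomogeneous.sum
  intro j hj
  exact isHomogeneous_monomial _ (fm_degree (by simp at hj; omega))

-- reconstruction of a homogeneous binary form from its coefficient vector
lemma reconstruct {k : ℕ} {P : MvPolynomial (Fin 2) ℂ} (hP : P.IsHomogeneous k) :
    toPoly k (cvec k P) = P := by
  apply MvPolynomial.ext
  intro m
  rw [toPoly, MvPolynomial.coeff_sum]
  by_cases hm : m 0 + m 1 = k ∧ m 1 ≤ k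
  · have hfm : fm k (m 1) = m := by
      ext t
      match t with
      | 0 => rw [fm_apply0]; omega
      | 1 => rw [fm_apply1]
    rw [Finset.sum_eq_single (m 1)]
    · rw [coeff_monomial, if_pos hfm, cvec, hfm]
    · intro b _ hb
      rw [coeff_monomial, if_neg]
      intro hc
      exact hb (by have := DFunLike.congr_fun hc 1; simpa [fm_apply1] using this)
    · intro h; exact absurd (Finset.mem_range.mpr (by omega)) h
  · have hPm : coeff m P = 0 := by
      apply hP.coeff_eq_zero
      rw [degree_fin2]
      omega
    rw [hPm]
    apply Finset.sum_eq_zero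
    intro b hb
    rw [coeff_monomial, if_neg]
    intro hc
    rw [← hc] at hm
    simp only [fm_apply0, fm_apply1] at hm
    simp at hb
    omega
-- substitution algebra map: X t ↦ ∑ s, M s t • X s
def sub2 (M : Matrix (Fin 2) (Fin 2) ℂ) :
    MvPolynomial (Fin 2) ℂ →ₐ[ℂ] MvPolynomial (Fin 2) ℂ :=
  aeval (fun t => ∑ s : Fin 2, C (M s t) * X s)

lemma sub2_X (M : Matrix (Fin 2) (Fin 2) ℂ) (t : Fin 2) :
    sub2 M (X t) = ∑ s : Fin 2, C (M s t) * X s := by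
  simp [sub2]

lemma sub2_comp (M N : Matrix (Fin 2) (Fin 2) ℂ) (P : MvPolynomial (Fin 2) ℂ) :
    sub2 M (sub2 N P) = sub2 (M * N) P := by
  show ((sub2 M).comp (sub2 N)) P = sub2 (M * N) P
  refine DFunLike.congr_fun ?_ P
  apply MvPolynomial.algHom_ext
  intro t
  simp only [AlgHom.comp_apply, sub2_X, map_sum, map_mul, aeval_X]
  simp only [sub2, algHom_C, aeval_X, algebraMap_eq]
  rw [Finset.sum_congr rfl (fun x _ => Finset.mul_sum _ _ _)]
  rw [Finset.sum_comm]
  apply Finset.sum_congr rfl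
  intro s _
  simp only [Matrix.mul_apply, map_sum, Finset.sum_mul]
  apply Finset.sum_congr rfl
  intro r _
  rw [map_mul]
  ring

-- entries of the matrix of sub2 acting on forms of degree k
def TN (M : Matrix (Fin 2) (Fin 2) ℂ) (k i j : ℕ) : ℂ :=
  cvec k (sub2 M (monomial (fm k i) 1)) j

lemma linear_isHomogeneous (M : Matrix (Fin 2) (Fin 2) ℂ) (t : Fin 2) :
    IsHomogeneous (∑ s : Fin 2, C (M s t) * X s) 1 := by
  apply IsHomogeneous.sum
  intro s _
  have h : C (M s t) * X s = monomial (Finsupp.single s 1) (M s t) := by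
    have : (X s : MvPolynomial (Fin 2) ℂ) = monomial (Finsupp.single s 1) 1 := by
      rw [← X_pow_eq_monomial, pow_one]
    rw [this, ← monomial_zero' (R := ℂ), monomial_mul, zero_add, mul_one]
  rw [h]
  exact isHomogeneous_monomial _ (by
    rw [Finsupp.degree_single])

lemma sub2_monomial_isHomogeneous (M : Matrix (Fin 2) (Fin 2) ℂ) {k i : ℕ} (hi : i ≤ k) :
    IsHomogeneous (sub2 M (monomial (fm k i) 1)) k := by
  rw [monomial_fm, map_one, one_mul, map_mul, map_pow, map_pow, sub2_X, sub2_X]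
  have h0 := (linear_isHomogeneous M 0).pow (k - i)
  have h1 := (linear_isHomogeneous M 1).pow i
  have h2 := h0.mul h1
  have h3 : 1 * (k - i) + 1 * i = k := by omega
  rw [h3] at h2
  exact h2

lemma sub2_toPoly (M : Matrix (Fin 2) (Fin 2) ℂ) (k : ℕ) (f : ℕ → ℂ) :
    sub2 M (toPoly k f) = toPoly k (fun j => ∑ i ∈ range (k + 1), f i * TN M k i j) := by
  unfold toPoly
  rw [map_sum]
  have key : ∀ i ∈ range (k + 1), sub2 M (monomial (fm k i) (f i))
      = ∑ j ∈ range (k + 1), monomial (fm k j) (f i * TN M k i j) := by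
    intro i hi
    have hi' : i ≤ k := by simp at hi; omega
    have h1 : monomial (fm k i) (f i) = C (f i) * monomial (fm k i) 1 := by
      rw [monomial_fm, monomial_fm, map_one]; ring
    rw [h1, map_mul, algHom_C]
    have h2 : sub2 M (monomial (fm k i) 1) = toPoly k (cvec k (sub2 M (monomial (fm k i) 1))) :=
      (reconstruct (sub2_monomial_isHomogeneous M hi')).symm
    rw [h2, toPoly, Finset.mul_sum]
    apply Finset.sum_congr rfl
    intro j _
    rw [algebraMap_eq, C_mul_monomial]
    rfl
  rw [Finset.sum_congr rfl key, Finset.sum_comm]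
  apply Finset.sum_congr rfl
  intro j _
  rw [← map_sum (monomial (fm k j))]
lemma TN_mul (M N : Matrix (Fin 2) (Fin 2) ℂ) {k i j : ℕ} (hi : i ≤ k) (hj : j ≤ k) :
    TN (M * N) k i j = ∑ s ∈ range (k + 1), TN N k i s * TN M k s j := by
  have h1 : sub2 (M * N) (monomial (fm k i) 1) = sub2 M (sub2 N (monomial (fm k i) 1)) :=
    (sub2_comp M N _).symm
  have h2 : sub2 N (monomial (fm k i) 1) = toPoly k (TN N k i) :=
    (reconstruct (sub2_monomial_isHomogeneous N hi)).symm
  calc TN (M * N) k i j = cvec k (sub2 M (toPoly k (TN N k i))) j := by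
        rw [TN, h1, h2]
    _ = cvec k (toPoly k fun j => ∑ s ∈ range (k + 1), TN N k i s * TN M k s j) j := by
        rw [sub2_toPoly]
    _ = ∑ s ∈ range (k + 1), TN N k i s * TN M k s j := cvec_toPoly _ _ hj

-- the matrix of sub2 M acting on forms of degree n - 1
def Tm (n : ℕ) (M : Matrix (Fin 2) (Fin 2) ℂ) : Matrix (Fin n) (Fin n) ℂ :=
  fun i j => TN M (n - 1) i j

lemma Tm_mul {n : ℕ} (hn : 1 ≤ n) (M N : Matrix (Fin 2) (Fin 2) ℂ) :
    Tm n (M * N) = Tm n N * Tm n M := by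
  ext i j
  rw [Matrix.mul_apply, Tm]
  rw [TN_mul M N (by omega : (i : ℕ) ≤ n - 1) (by omega : (j : ℕ) ≤ n - 1)]
  rw [show n - 1 + 1 = n by omega, ← Fin.sum_univ_eq_sum_range]
  rfl

def DetProp (M : Matrix (Fin 2) (Fin 2) ℂ) : Prop :=
  ∀ n : ℕ, 1 ≤ n → (Tm n M).det = M.det ^ (∑ i ∈ range n, i)

lemma DetProp.mul {M N : Matrix (Fin 2) (Fin 2) ℂ} (hM : DetProp M) (hN : DetProp N) :
    DetProp (M * N) := by
  intro n hn
  rw [Tm_mul hn, Matrix.det_mul, hM n hn, hN n hn, Matrix.det_mul, mul_pow, mul_comm]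

-- diagonal matrices
lemma sub2_diag_monomial (a b : ℂ) {k i : ℕ} (hi : i ≤ k) :
    sub2 !![a, 0; 0, b] (monomial (fm k i) 1) = monomial (fm k i) (a ^ (k - i) * b ^ i) := by
  rw [monomial_fm, map_one, one_mul, map_mul, map_pow, map_pow, sub2_X, sub2_X]
  have e0 : ∑ s : Fin 2, C (!![a, 0; 0, b] s 0) * X s = C a * X 0 := by
    rw [Fin.sum_univ_two]; simp
  have e1 : ∑ s : Fin 2, C (!![a, 0; 0, b] s 1) * X s = C b * X 1 := by
    rw [Fin.sum_univ_two]; simp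
  rw [e0, e1, monomial_fm, mul_pow, mul_pow, ← C_pow, ← C_pow, map_mul]
  ring

lemma TN_diag (a b : ℂ) {k i : ℕ} (hi : i ≤ k) (j : ℕ) :
    TN !![a, 0; 0, b] k i j = if i = j then a ^ (k - i) * b ^ i else 0 := by
  rw [TN, sub2_diag_monomial a b hi, cvec_monomial_fm]

lemma detProp_diag (a b : ℂ) : DetProp !![a, 0; 0, b] := by
  intro n hn
  have hdiag : ∀ i j : Fin n, i ≠ j → Tm n !![a, 0; 0, b] i j = 0 := by
    intro i j hij
    rw [Tm, TN_diag a b (by omega : (i : ℕ) ≤ n - 1), if_neg (by simpa [Fin.ext_iff] using hij)]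
  rw [Matrix.det_of_upperTriangular (by intro i j h; exact hdiag i j (ne_of_gt h) : (Tm n !![a, 0; 0, b]).BlockTriangular id)]
  have hd : ∀ i : Fin n, Tm n !![a, 0; 0, b] i i = a ^ (n - 1 - i) * b ^ (i : ℕ) := by
    intro i
    rw [Tm, TN_diag a b (by omega : (i : ℕ) ≤ n - 1), if_pos rfl]
  rw [Finset.prod_congr rfl (fun i _ => hd i)]
  rw [Finset.prod_mul_distrib, Finset.prod_pow_eq_pow_sum, Finset.prod_pow_eq_pow_sum]
  rw [Matrix.det_fin_two_of]
  have h1 : (∑ i : Fin n, (n - 1 - (i : ℕ))) = ∑ i ∈ range n, i := by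
    rw [Fin.sum_univ_eq_sum_range (fun i => n - 1 - i) n]
    exact Finset.sum_range_reflect (fun x => x) n
  have h2 : (∑ i : Fin n, (i : ℕ)) = ∑ i ∈ range n, i := Fin.sum_univ_eq_sum_range (fun i => i) n
  rw [h1, h2, mul_zero, sub_zero, mul_pow]
-- lower unipotent !![1,0;t,1] : X 0 ↦ X 0 + t X 1, X 1 ↦ X 1
lemma sub2_L_monomial (t : ℂ) {k i : ℕ} (hi : i ≤ k) :
    sub2 !![1, 0; t, 1] (monomial (fm k i) 1)
      = ∑ r ∈ range (k - i + 1), monomial (fm k (k - r)) (t ^ (k - i - r) * ((k - i).choose r)) := by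
  rw [monomial_fm, map_one, one_mul, map_mul, map_pow, map_pow, sub2_X, sub2_X]
  have e0 : ∑ s : Fin 2, C (!![(1:ℂ), 0; t, 1] s 0) * X s = X 0 + C t * X 1 := by
    rw [Fin.sum_univ_two]; simp
  have e1 : ∑ s : Fin 2, C (!![(1:ℂ), 0; t, 1] s 1) * X s = X 1 := by
    rw [Fin.sum_univ_two]; simp
  rw [e0, e1, add_pow, Finset.sum_mul]
  apply Finset.sum_congr rfl
  intro r hr
  have hr' : r ≤ k - i := by simp at hr; omega
  rw [monomial_fm]
  have h1 : k - (k - r) = r := by omega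
  have h2 : (k - i - r) + i = k - r := by omega
  rw [h1, mul_pow, ← C_pow, map_mul, ← h2, pow_add]
  have hcast : ((k - i).choose r : MvPolynomial (Fin 2) ℂ) = C (((k - i).choose r : ℕ) : ℂ) := by
    simp
  rw [hcast]
  ring

lemma TN_L (t : ℂ) {k i : ℕ} (hi : i ≤ k) (j : ℕ) (hj : j ≤ k) :
    TN !![1, 0; t, 1] k i j = if j < i then 0 else t ^ (j - i) * ((k - i).choose (k - j)) := by
  rw [TN, sub2_L_monomial t hi, cvec]
  rw [MvPolynomial.coeff_sum]
  have hterm : ∀ r ∈ range (k - i + 1),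
      coeff (fm k j) (monomial (fm k (k - r)) (t ^ (k - i - r) * ((k - i).choose r)))
        = if r = k - j ∧ ¬ j < i then t ^ (j - i) * ((k - i).choose (k - j)) else 0 := by
    intro r hr
    have hr' : r ≤ k - i := by simp at hr; omega
    rw [coeff_monomial]
    by_cases hc : fm k (k - r) = fm k j
    · obtain ⟨hc1, hc2⟩ := (fm_eq_iff k k (k - r) j).mp hc
      have h3 : r = k - j := by omega
      have h4 : ¬ j < i := by omega
      rw [if_pos hc, if_pos ⟨h3, h4⟩, h3, show k - i - (k - j) = j - i by omega]
    · rw [if_neg hc, if_neg]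
      rintro ⟨h3, h4⟩
      exact hc ((fm_eq_iff k k (k - r) j).mpr ⟨by omega, by omega⟩)
  rw [Finset.sum_congr rfl hterm]
  by_cases hj' : j < i
  · rw [if_pos hj']
    apply Finset.sum_eq_zero
    intro r hr
    rw [if_neg (by tauto)]
  · rw [if_neg hj']
    rw [Finset.sum_eq_single (k - j)]
    · rw [if_pos ⟨rfl, hj'⟩]
    · intro b _ hb
      rw [if_neg (by tauto)]
    · intro h
      exact absurd (Finset.mem_range.mpr (by omega)) h

lemma detProp_L (t : ℂ) : DetProp !![1, 0; t, 1] := by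
  intro n hn
  have htri : (Tm n !![1, 0; t, 1]).BlockTriangular id := by
    intro i j h
    rw [Tm, TN_L t (by omega : (i:ℕ) ≤ n - 1) _ (by omega : (j:ℕ) ≤ n - 1), if_pos (show (j:ℕ) < (i:ℕ) from h)]
  rw [Matrix.det_of_upperTriangular htri]
  have hd : ∀ i : Fin n, Tm n !![1, 0; t, 1] i i = 1 := by
    intro i
    rw [Tm, TN_L t (by omega : (i:ℕ) ≤ n - 1) _ (by omega : (i:ℕ) ≤ n - 1), if_neg (lt_irrefl _)]
    simp
  rw [Finset.prod_congr rfl (fun i _ => hd i), Finset.prod_const_one, Matrix.det_fin_two_of]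
  norm_num

-- upper unipotent !![1,t;0,1] : X 0 ↦ X 0, X 1 ↦ t X 0 + X 1
lemma sub2_U_monomial (t : ℂ) {k i : ℕ} (hi : i ≤ k) :
    sub2 !![1, t; 0, 1] (monomial (fm k i) 1)
      = ∑ r ∈ range (i + 1), monomial (fm k (i - r)) (t ^ r * (i.choose r)) := by
  rw [monomial_fm, map_one, one_mul, map_mul, map_pow, map_pow, sub2_X, sub2_X]
  have e0 : ∑ s : Fin 2, C (!![(1:ℂ), t; 0, 1] s 0) * X s = X 0 := by
    rw [Fin.sum_univ_two]; simp
  have e1 : ∑ s : Fin 2, C (!![(1:ℂ), t; 0, 1] s 1) * X s = C t * X 0 + X 1 := by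
    rw [Fin.sum_univ_two]; simp
  rw [e0, e1, add_pow, Finset.mul_sum]
  apply Finset.sum_congr rfl
  intro r hr
  have hr' : r ≤ i := by simp at hr; omega
  rw [monomial_fm]
  have h1 : k - (i - r) = (k - i) + r := by omega
  rw [mul_pow, ← C_pow, map_mul, h1, pow_add]
  have hcast : ((i).choose r : MvPolynomial (Fin 2) ℂ) = C (((i).choose r : ℕ) : ℂ) := by simp
  rw [hcast]
  ring

lemma TN_U (t : ℂ) {k i : ℕ} (hi : i ≤ k) (j : ℕ) :
    TN !![1, t; 0, 1] k i j = if i < j then 0 else t ^ (i - j) * (i.choose (i - j)) := by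
  rw [TN, sub2_U_monomial t hi, cvec]
  rw [MvPolynomial.coeff_sum]
  have hterm : ∀ r ∈ range (i + 1),
      coeff (fm k j) (monomial (fm k (i - r)) (t ^ r * (i.choose r)))
        = if r = i - j ∧ ¬ i < j then t ^ (i - j) * (i.choose (i - j)) else 0 := by
    intro r hr
    have hr' : r ≤ i := by simp at hr; omega
    rw [coeff_monomial]
    by_cases hc : fm k (i - r) = fm k j
    · obtain ⟨hc1, hc2⟩ := (fm_eq_iff k k (i - r) j).mp hc
      have h3 : r = i - j := by omega
      have h4 : ¬ i < j := by omega
      rw [if_pos hc, if_pos ⟨h3, h4⟩, h3]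
    · rw [if_neg hc, if_neg]
      rintro ⟨h3, h4⟩
      exact hc ((fm_eq_iff k k (i - r) j).mpr ⟨by omega, by omega⟩)
  rw [Finset.sum_congr rfl hterm]
  by_cases hj' : i < j
  · rw [if_pos hj']
    apply Finset.sum_eq_zero
    intro r hr
    rw [if_neg (by tauto)]
  · rw [if_neg hj']
    rw [Finset.sum_eq_single (i - j)]
    · rw [if_pos ⟨rfl, hj'⟩]
    · intro b _ hb
      rw [if_neg (by tauto)]
    · intro h
      exact absurd (Finset.mem_range.mpr (by omega)) h

lemma detProp_U (t : ℂ) : DetProp !![1, t; 0, 1] := by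
  intro n hn
  have htri : (Tm n !![1, t; 0, 1]).BlockTriangular OrderDual.toDual := by
    intro i j h
    rw [Tm, TN_U t (by omega : (i:ℕ) ≤ n - 1), if_pos (show (i:ℕ) < (j:ℕ) from h)]
  rw [Matrix.det_of_lowerTriangular _ htri]
  have hd : ∀ i : Fin n, Tm n !![1, t; 0, 1] i i = 1 := by
    intro i
    rw [Tm, TN_U t (by omega : (i:ℕ) ≤ n - 1), if_neg (lt_irrefl _)]
    simp
  rw [Finset.prod_congr rfl (fun i _ => hd i), Finset.prod_const_one, Matrix.det_fin_two_of]
  norm_num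
lemma detProp_of_ne_zero {M : Matrix (Fin 2) (Fin 2) ℂ} (h : M 0 0 ≠ 0) : DetProp M := by
  set a := M 0 0 with ha
  set b := M 0 1 with hb
  set c := M 1 0 with hc
  set d := M 1 1 with hd
  have hdec : M = !![1, 0; c / a, 1] * (!![a, 0; 0, (a * d - b * c) / a] * !![1, b / a; 0, 1]) := by
    rw [Matrix.mul_fin_two, Matrix.mul_fin_two]
    rw [Matrix.eta_fin_two M, ← ha, ← hb, ← hc, ← hd]
    ext i j
    fin_cases i <;> fin_cases j <;>
      simp only [Matrix.of_apply, Matrix.cons_val', Matrix.cons_val_zero, Matrix.cons_val_one,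
        Matrix.empty_val', Matrix.cons_val_fin_one, Fin.zero_eta, Fin.mk_one, Fin.isValue] <;>
      field_simp <;> ring
  rw [hdec]
  exact (detProp_L (c / a)).mul ((detProp_diag a ((a * d - b * c) / a)).mul (detProp_U (b / a)))

lemma detProp_of_col_ne_zero {M : Matrix (Fin 2) (Fin 2) ℂ} (h : M 0 0 ≠ 0 ∨ M 1 0 ≠ 0) :
    DetProp M := by
  by_cases h0 : M 0 0 ≠ 0
  · exact detProp_of_ne_zero h0
  · have h1 : M 1 0 ≠ 0 := by tauto
    have hM' : ((!![1, 1; 0, 1] : Matrix (Fin 2) (Fin 2) ℂ) * M) 0 0 ≠ 0 := by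
      rw [Matrix.mul_apply, Fin.sum_univ_two]
      push_neg at h0
      rw [h0]
      simpa using h1
    have hdec : M = !![1, -1; 0, 1] * (!![1, 1; 0, 1] * M) := by
      rw [← Matrix.mul_assoc]
      have : !![(1:ℂ), -1; 0, 1] * !![1, 1; 0, 1] = 1 := by
        rw [Matrix.mul_fin_two, Matrix.one_fin_two]
        norm_num
      rw [this, Matrix.one_mul]
    rw [hdec]
    exact (detProp_U (-1)).mul (detProp_of_ne_zero hM')
lemma fm_add_eq_iff (a u b v c w : ℕ) :
    fm a u + fm b v = fm c w ↔ ((a - u) + (b - v) = c - w ∧ u + v = w) := by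
  constructor
  · intro h
    constructor
    · have := DFunLike.congr_fun h 0
      simpa [fm_apply0, Finsupp.add_apply] using this
    · have := DFunLike.congr_fun h 1
      simpa [fm_apply1, Finsupp.add_apply] using this
  · rintro ⟨h1, h2⟩
    ext t
    match t with
    | 0 => simpa [fm_apply0, Finsupp.add_apply] using h1
    | 1 => simpa [fm_apply1, Finsupp.add_apply] using h2

-- core lemma: rows of the Sylvester matrix are coefficient vectors of x0^(d-1-i) x1^i * F
lemma cvec_mono_mul {d : ℕ} (hd : 1 ≤ d) (f : ℕ → ℂ) {i j : ℕ} (hi : i < d) (hj : j < d + d) :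
    cvec (2 * d - 1) (monomial (fm (d - 1) i) 1 * toPoly d f) j
      = if i ≤ j ∧ j ≤ i + d then f (j - i) else 0 := by
  rw [toPoly, Finset.mul_sum]
  have hterm : ∀ s ∈ range (d + 1),
      monomial (fm (d - 1) i) (1:ℂ) * monomial (fm d s) (f s)
        = monomial (fm (d - 1) i + fm d s) (f s) := by
    intro s _
    rw [monomial_mul, one_mul]
  rw [Finset.sum_congr rfl hterm, cvec, MvPolynomial.coeff_sum]
  have hterm2 : ∀ s ∈ range (d + 1),
      coeff (fm (2 * d - 1) j) (monomial (fm (d - 1) i + fm d s) (f s))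
        = if s = j - i ∧ i ≤ j ∧ j ≤ i + d then f (j - i) else 0 := by
    intro s hs
    have hs' : s ≤ d := by simp at hs; omega
    rw [coeff_monomial]
    by_cases hc : fm (d - 1) i + fm d s = fm (2 * d - 1) j
    · obtain ⟨hc1, hc2⟩ := (fm_add_eq_iff _ _ _ _ _ _).mp hc
      have h3 : s = j - i ∧ i ≤ j ∧ j ≤ i + d := by omega
      rw [if_pos hc, if_pos h3, h3.1]
    · rw [if_neg hc, if_neg]
      rintro ⟨h3, h4, h5⟩
      exact hc ((fm_add_eq_iff _ _ _ _ _ _).mpr ⟨by omega, by omega⟩)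
  rw [Finset.sum_congr rfl hterm2]
  by_cases hcond : i ≤ j ∧ j ≤ i + d
  · rw [if_pos hcond, Finset.sum_eq_single (j - i)]
    · rw [if_pos ⟨rfl, hcond⟩]
    · intro b _ hb
      rw [if_neg (by tauto)]
    · intro h
      exact absurd (Finset.mem_range.mpr (by omega)) h
  · rw [if_neg hcond]
    apply Finset.sum_eq_zero
    intro s _
    rw [if_neg (by tauto)]

section SylId

def ι (d : ℕ) : Fin d ⊕ Fin d ≃ Fin (d + d) := finSumFinEquiv

def SS (d : ℕ) (f g : ℕ → ℂ) : Matrix (Fin d ⊕ Fin d) (Fin d ⊕ Fin d) ℂ :=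
  (sylM d d f g).submatrix (ι d) (ι d)

lemma SS_inl {d : ℕ} (f g : ℕ → ℂ) (i : Fin d) (q : Fin d ⊕ Fin d) :
    SS d f g (Sum.inl i) q
      = if (i : ℕ) ≤ (ι d q : ℕ) ∧ (ι d q : ℕ) ≤ (i : ℕ) + d then f ((ι d q : ℕ) - i) else 0 := by
  have hval : ((ι d (Sum.inl i) : Fin (d + d)) : ℕ) = (i : ℕ) := by
    simp [ι, finSumFinEquiv]
  rw [SS, Matrix.submatrix_apply, sylM, hval, if_pos (by omega : (i : ℕ) < d)]

lemma SS_inr {d : ℕ} (f g : ℕ → ℂ) (i : Fin d) (q : Fin d ⊕ Fin d) :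
    SS d f g (Sum.inr i) q
      = if (i : ℕ) ≤ (ι d q : ℕ) ∧ (ι d q : ℕ) ≤ (i : ℕ) + d then g ((ι d q : ℕ) - i) else 0 := by
  have hval : ((ι d (Sum.inr i) : Fin (d + d)) : ℕ) = d + (i : ℕ) := by
    simp [ι, finSumFinEquiv]
    omega
  rw [SS, Matrix.submatrix_apply, sylM, hval, if_neg (by omega : ¬ d + (i : ℕ) < d)]
  have h1 : d + (i : ℕ) - d = (i : ℕ) := by omega
  rw [h1]

-- row lemma via polynomials
lemma SS_inl_poly {d : ℕ} (hd : 1 ≤ d) (f g : ℕ → ℂ) (i : Fin d) (q : Fin d ⊕ Fin d) :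
    SS d f g (Sum.inl i) q
      = cvec (2 * d - 1) (monomial (fm (d - 1) (i : ℕ)) 1 * toPoly d f) (ι d q : ℕ) := by
  rw [SS_inl f g i q, cvec_mono_mul hd f i.isLt (ι d q).isLt]

lemma SS_inr_poly {d : ℕ} (hd : 1 ≤ d) (f g : ℕ → ℂ) (i : Fin d) (q : Fin d ⊕ Fin d) :
    SS d f g (Sum.inr i) q
      = cvec (2 * d - 1) (monomial (fm (d - 1) (i : ℕ)) 1 * toPoly d g) (ι d q : ℕ) := by
  rw [SS_inr f g i q, cvec_mono_mul hd g i.isLt (ι d q).isLt]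

-- I1: mixing identity
lemma mixing_identity {d : ℕ} (f g : ℕ → ℂ) (α β γ δ : ℂ) :
    Matrix.fromBlocks (α • 1) (β • 1) (γ • 1) (δ • 1) * SS d f g
      = SS d (fun j => α * f j + β * g j) (fun j => γ * f j + δ * g j) := by
  ext p q
  rw [Matrix.mul_apply]
  rw [Fintype.sum_sum_type]
  cases p with
  | inl i =>
    have h1 : ∀ r : Fin d, Matrix.fromBlocks (α • (1:Matrix (Fin d) (Fin d) ℂ)) (β • (1:Matrix (Fin d) (Fin d) ℂ)) (γ • (1:Matrix (Fin d) (Fin d) ℂ)) (δ • (1:Matrix (Fin d) (Fin d) ℂ)) (Sum.inl i) (Sum.inl r)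
        = if i = r then α else 0 := by
      intro r
      rw [Matrix.fromBlocks_apply₁₁, Matrix.smul_apply, Matrix.one_apply]
      by_cases h : i = r <;> simp [h]
    have h2 : ∀ r : Fin d, Matrix.fromBlocks (α • (1:Matrix (Fin d) (Fin d) ℂ)) (β • (1:Matrix (Fin d) (Fin d) ℂ)) (γ • (1:Matrix (Fin d) (Fin d) ℂ)) (δ • (1:Matrix (Fin d) (Fin d) ℂ)) (Sum.inl i) (Sum.inr r)
        = if i = r then β else 0 := by
      intro r
      rw [Matrix.fromBlocks_apply₁₂, Matrix.smul_apply, Matrix.one_apply]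
      by_cases h : i = r <;> simp [h]
    simp only [h1, h2]
    rw [Finset.sum_eq_single i (fun b _ hb => by rw [if_neg (fun h => hb h.symm), zero_mul]) (by simp),
        Finset.sum_eq_single i (fun b _ hb => by rw [if_neg (fun h => hb h.symm), zero_mul]) (by simp)]
    rw [if_pos rfl, if_pos rfl]
    rw [SS_inl, SS_inl, SS_inr]
    by_cases hcond : (i : ℕ) ≤ (ι d q : ℕ) ∧ (ι d q : ℕ) ≤ (i : ℕ) + d
    · rw [if_pos hcond, if_pos hcond, if_pos hcond]
    · rw [if_neg hcond, if_neg hcond, if_neg hcond]; ring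
  | inr i =>
    have h1 : ∀ r : Fin d, Matrix.fromBlocks (α • (1:Matrix (Fin d) (Fin d) ℂ)) (β • (1:Matrix (Fin d) (Fin d) ℂ)) (γ • (1:Matrix (Fin d) (Fin d) ℂ)) (δ • (1:Matrix (Fin d) (Fin d) ℂ)) (Sum.inr i) (Sum.inl r)
        = if i = r then γ else 0 := by
      intro r
      rw [Matrix.fromBlocks_apply₂₁, Matrix.smul_apply, Matrix.one_apply]
      by_cases h : i = r <;> simp [h]
    have h2 : ∀ r : Fin d, Matrix.fromBlocks (α • (1:Matrix (Fin d) (Fin d) ℂ)) (β • (1:Matrix (Fin d) (Fin d) ℂ)) (γ • (1:Matrix (Fin d) (Fin d) ℂ)) (δ • (1:Matrix (Fin d) (Fin d) ℂ)) (Sum.inr i) (Sum.inr r)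
        = if i = r then δ else 0 := by
      intro r
      rw [Matrix.fromBlocks_apply₂₂, Matrix.smul_apply, Matrix.one_apply]
      by_cases h : i = r <;> simp [h]
    simp only [h1, h2]
    rw [Finset.sum_eq_single i (fun b _ hb => by rw [if_neg (fun h => hb h.symm), zero_mul]) (by simp),
        Finset.sum_eq_single i (fun b _ hb => by rw [if_neg (fun h => hb h.symm), zero_mul]) (by simp)]
    rw [if_pos rfl, if_pos rfl]
    rw [SS_inl, SS_inr, SS_inr]
    by_cases hcond : (i : ℕ) ≤ (ι d q : ℕ) ∧ (ι d q : ℕ) ≤ (i : ℕ) + d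
    · rw [if_pos hcond, if_pos hcond, if_pos hcond]
    · rw [if_neg hcond, if_neg hcond, if_neg hcond]; ring

end SylId
lemma sub2_toPoly_isHomogeneous (M : Matrix (Fin 2) (Fin 2) ℂ) (k : ℕ) (f : ℕ → ℂ) :
    (sub2 M (toPoly k f)).IsHomogeneous k := by
  rw [toPoly, map_sum]
  apply IsHomogeneous.sum
  intro j hj
  have hj' : j ≤ k := by simp at hj; omega
  have h1 : monomial (fm k j) (f j) = C (f j) * monomial (fm k j) 1 := by
    rw [monomial_fm, monomial_fm, map_one]; ring
  rw [h1, map_mul, algHom_C]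
  exact (sub2_monomial_isHomogeneous M hj').C_mul _

lemma subst_row {d : ℕ} (hd : 1 ≤ d) (M : Matrix (Fin 2) (Fin 2) ℂ) (h : ℕ → ℂ)
    (i : Fin d) (q : Fin d ⊕ Fin d) :
    ∑ r : Fin d, Tm d M i r
        * cvec (2 * d - 1) (monomial (fm (d - 1) (r : ℕ)) 1
            * toPoly d (cvec d (sub2 M (toPoly d h)))) (ι d q : ℕ)
      = ∑ r : Fin d ⊕ Fin d, cvec (2 * d - 1) (monomial (fm (d - 1) (i : ℕ)) 1 * toPoly d h) (ι d r : ℕ)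
          * TN M (2 * d - 1) (ι d r : ℕ) (ι d q : ℕ) := by
  set D := 2 * d - 1 with hD
  set c := (ι d q : ℕ) with hcdef
  have hc : c ≤ D := by have := (ι d q).isLt; omega
  have hrec : toPoly d (cvec d (sub2 M (toPoly d h))) = sub2 M (toPoly d h) :=
    reconstruct (sub2_toPoly_isHomogeneous M d h)
  rw [hrec]
  -- LHS = cvec D (sub2 M (mono_i) * sub2 M (toPoly d h)) c
  have step1 : ∑ r : Fin d, Tm d M i r
      * cvec D (monomial (fm (d - 1) (r : ℕ)) 1 * sub2 M (toPoly d h)) c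
      = cvec D ((∑ r : Fin d, monomial (fm (d - 1) (r : ℕ)) (TN M (d - 1) i r))
          * sub2 M (toPoly d h)) c := by
    rw [Finset.sum_mul]
    simp only [cvec]
    rw [MvPolynomial.coeff_sum]
    apply Finset.sum_congr rfl
    intro r _
    have h5 : monomial (fm (d - 1) (r : ℕ)) (TN M (d - 1) i r)
        = C (TN M (d - 1) i r) * monomial (fm (d - 1) (r : ℕ)) 1 := by
      rw [monomial_fm, monomial_fm, map_one]; ring
    rw [h5, mul_assoc, coeff_C_mul]
    rfl
  rw [step1]
  have step2 : (∑ r : Fin d, monomial (fm (d - 1) (r : ℕ)) (TN M (d - 1) i r))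
      = sub2 M (monomial (fm (d - 1) (i : ℕ)) 1) := by
    have hhom := sub2_monomial_isHomogeneous M (show (i : ℕ) ≤ d - 1 by omega)
    rw [← reconstruct hhom, toPoly]
    rw [show d - 1 + 1 = d by omega, ← Fin.sum_univ_eq_sum_range]
    rfl
  rw [step2, ← map_mul]
  -- now expand via sub2_toPoly
  set Q := monomial (fm (d - 1) (i : ℕ)) 1 * toPoly d h with hQ
  have hQhom : Q.IsHomogeneous D := by
    have h1 : IsHomogeneous (monomial (fm (d - 1) (i : ℕ)) (1:ℂ)) (d - 1) :=
      isHomogeneous_monomial _ (fm_degree (by omega))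
    have h2 := h1.mul (toPoly_isHomogeneous d h)
    rwa [show d - 1 + d = D by omega] at h2
  have step3 : cvec D (sub2 M Q) c = ∑ s ∈ range (D + 1), cvec D Q s * TN M D s c := by
    conv_lhs => rw [← reconstruct hQhom]
    rw [sub2_toPoly, cvec_toPoly _ _ hc]
  rw [step3]
  rw [show D + 1 = d + d by omega, ← Fin.sum_univ_eq_sum_range
    (fun s => cvec D Q s * TN M D s c) (d + d)]
  rw [← Equiv.sum_comp (ι d) (fun u : Fin (d + d) => cvec D Q (u : ℕ) * TN M D (u : ℕ) c)]

def TT (d : ℕ) (M : Matrix (Fin 2) (Fin 2) ℂ) : Matrix (Fin d ⊕ Fin d) (Fin d ⊕ Fin d) ℂ :=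
  fun p q => TN M (2 * d - 1) (ι d p : ℕ) (ι d q : ℕ)

lemma subst_identity {d : ℕ} (hd : 1 ≤ d) (M : Matrix (Fin 2) (Fin 2) ℂ) (f g : ℕ → ℂ) :
    Matrix.fromBlocks (Tm d M) 0 0 (Tm d M)
        * SS d (cvec d (sub2 M (toPoly d f))) (cvec d (sub2 M (toPoly d g)))
      = SS d f g * TT d M := by
  ext p q
  rw [Matrix.mul_apply, Matrix.mul_apply, Fintype.sum_sum_type, Fintype.sum_sum_type]
  cases p with
  | inl i =>
    have hz : ∀ r : Fin d, Matrix.fromBlocks (Tm d M) (0 : Matrix (Fin d) (Fin d) ℂ)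
        (0 : Matrix (Fin d) (Fin d) ℂ) (Tm d M) (Sum.inl i) (Sum.inr r) = 0 := by
      intro r; rw [Matrix.fromBlocks_apply₁₂]; rfl
    simp only [Matrix.fromBlocks_apply₁₁, hz, zero_mul]
    rw [Finset.sum_const_zero, add_zero]
    have hrw : ∀ r : Fin d,
        SS d (cvec d (sub2 M (toPoly d f))) (cvec d (sub2 M (toPoly d g))) (Sum.inl r) q
          = cvec (2 * d - 1) (monomial (fm (d - 1) (r : ℕ)) 1
              * toPoly d (cvec d (sub2 M (toPoly d f)))) (ι d q : ℕ) :=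
      fun r => SS_inl_poly hd _ _ r q
    rw [Finset.sum_congr rfl (fun r _ => by rw [hrw r])]
    rw [subst_row hd M f i q]
    rw [Fintype.sum_sum_type]
    congr 1 <;> exact Finset.sum_congr rfl (fun r _ => by rw [SS_inl_poly hd f g i _]; rfl)
  | inr i =>
    have hz : ∀ r : Fin d, Matrix.fromBlocks (Tm d M) (0 : Matrix (Fin d) (Fin d) ℂ)
        (0 : Matrix (Fin d) (Fin d) ℂ) (Tm d M) (Sum.inr i) (Sum.inl r) = 0 := by
      intro r; rw [Matrix.fromBlocks_apply₂₁]; rfl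
    simp only [Matrix.fromBlocks_apply₂₂, hz, zero_mul]
    rw [Finset.sum_const_zero, zero_add]
    have hrw : ∀ r : Fin d,
        SS d (cvec d (sub2 M (toPoly d f))) (cvec d (sub2 M (toPoly d g))) (Sum.inr r) q
          = cvec (2 * d - 1) (monomial (fm (d - 1) (r : ℕ)) 1
              * toPoly d (cvec d (sub2 M (toPoly d g)))) (ι d q : ℕ) :=
      fun r => SS_inr_poly hd _ _ r q
    rw [Finset.sum_congr rfl (fun r _ => by rw [hrw r])]
    rw [subst_row hd M g i q]
    rw [Fintype.sum_sum_type]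
    congr 1 <;> exact Finset.sum_congr rfl (fun r _ => by rw [SS_inr_poly hd f g i _]; rfl)

lemma TT_eq_Tm {d : ℕ} (hd : 1 ≤ d) (M : Matrix (Fin 2) (Fin 2) ℂ) :
    TT d M = (Tm (d + d) M).submatrix (ι d) (ι d) := by
  ext p q
  rw [TT, Matrix.submatrix_apply, Tm, show d + d - 1 = 2 * d - 1 by omega]

lemma subst_det {d : ℕ} (hd : 1 ≤ d) (M : Matrix (Fin 2) (Fin 2) ℂ) (f g : ℕ → ℂ) :
    (Tm d M).det ^ 2
        * (sylM d d (cvec d (sub2 M (toPoly d f))) (cvec d (sub2 M (toPoly d g)))).det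
      = (sylM d d f g).det * (Tm (d + d) M).det := by
  have h := congrArg Matrix.det (subst_identity hd M f g)
  rw [Matrix.det_mul, Matrix.det_mul, Matrix.det_fromBlocks_zero₂₁, TT_eq_Tm hd] at h
  rw [SS, SS, Matrix.det_submatrix_equiv_self, Matrix.det_submatrix_equiv_self,
    Matrix.det_submatrix_equiv_self] at h
  rw [sq]
  exact h

-- determinant of the mixing block matrix via Kronecker products
def ee (d : ℕ) : Fin 2 × Fin d ≃ Fin d ⊕ Fin d where
  toFun p := if p.1 = 0 then Sum.inl p.2 else Sum.inr p.2
  invFun := Sum.elim (fun j => (0, j)) (fun j => (1, j))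
  left_inv := by rintro ⟨i, j⟩; fin_cases i <;> simp
  right_inv := by rintro (j | j) <;> simp

open Kronecker in
lemma det_mixing_blocks (d : ℕ) (α β γ δ : ℂ) :
    (Matrix.fromBlocks (α • 1) (β • 1) (γ • 1) (δ • 1) : Matrix (Fin d ⊕ Fin d) (Fin d ⊕ Fin d) ℂ).det
      = (α * δ - β * γ) ^ d := by
  have hB : (Matrix.fromBlocks (α • 1) (β • 1) (γ • 1) (δ • 1)
      : Matrix (Fin d ⊕ Fin d) (Fin d ⊕ Fin d) ℂ)
      = (!![α, β; γ, δ] ⊗ₖ (1 : Matrix (Fin d) (Fin d) ℂ)).submatrix (ee d).symm (ee d).symm := by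
    ext p q
    cases p <;> cases q <;>
      simp [ee, Matrix.kroneckerMap_apply, Matrix.smul_apply, Matrix.one_apply]
  rw [hB, Matrix.det_submatrix_equiv_self, Matrix.det_kronecker, Matrix.det_fin_two_of,
    Matrix.det_one, one_pow, mul_one, Fintype.card_fin]

lemma mixing_det {d : ℕ} (f g : ℕ → ℂ) (α β γ δ : ℂ) :
    (sylM d d (fun j => α * f j + β * g j) (fun j => γ * f j + δ * g j)).det
      = (α * δ - β * γ) ^ d * (sylM d d f g).det := by
  have h := congrArg Matrix.det (mixing_identity (d := d) f g α β γ δ)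
  rw [Matrix.det_mul, det_mixing_blocks, SS, SS, Matrix.det_submatrix_equiv_self,
    Matrix.det_submatrix_equiv_self] at h
  exact h.symm
lemma fin2_eq_zero {x : Fin 2} (h : x ≠ 1) : x = 0 := by omega

lemma prod_X_eq_monomial {m1 : ℕ} (g : Fin m1 → Fin 2) :
    (∏ k, (X (g k) : MvPolynomial (Fin 2) ℂ))
      = monomial (fm m1 ((univ.filter fun k => g k = 1).card)) 1 := by
  set cnt := (univ.filter fun k => g k = 1).card with hcnt
  have hcard : (univ.filter fun k => ¬ g k = 1).card = m1 - cnt := by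
    have := Finset.card_filter_add_card_filter_not (s := (univ : Finset (Fin m1)))
      (p := fun k => g k = 1)
    simp only [Finset.card_univ, Fintype.card_fin] at this
    omega
  rw [← Finset.prod_filter_mul_prod_filter_not univ (fun k => g k = 1)]
  have e1 : ∀ k ∈ univ.filter (fun k => g k = 1), (X (g k) : MvPolynomial (Fin 2) ℂ) = X 1 := by
    intro k hk
    rw [(Finset.mem_filter.mp hk).2]
  have h1 : ∏ k ∈ univ.filter (fun k => g k = 1), (X (g k) : MvPolynomial (Fin 2) ℂ)
      = X 1 ^ cnt := by
    rw [Finset.prod_congr rfl e1, Finset.prod_const, hcnt]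
  have e2 : ∀ k ∈ univ.filter (fun k => ¬ g k = 1), (X (g k) : MvPolynomial (Fin 2) ℂ) = X 0 := by
    intro k hk
    rw [fin2_eq_zero (Finset.mem_filter.mp hk).2]
  have h2 : ∏ k ∈ univ.filter (fun k => ¬ g k = 1), (X (g k) : MvPolynomial (Fin 2) ℂ)
      = X 0 ^ (m1 - cnt) := by
    rw [Finset.prod_congr rfl e2, Finset.prod_const, hcard]
  rw [h1, h2, monomial_fm, map_one, one_mul, mul_comm]

lemma tensor_toPoly {m1 : ℕ} (A : Fin 2 → (Fin m1 → Fin 2) → ℂ) (i0 : Fin 2) :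
    toPoly m1 (bCoeff A i0)
      = ∑ g : Fin m1 → Fin 2, C (A i0 g) * ∏ k, X (g k) := by
  have hstep : ∀ g : Fin m1 → Fin 2, C (A i0 g) * ∏ k, (X (g k) : MvPolynomial (Fin 2) ℂ)
      = monomial (fm m1 ((univ.filter fun k => g k = 1).card)) (A i0 g) := by
    intro g
    rw [prod_X_eq_monomial, C_mul_monomial, mul_one]
  rw [Finset.sum_congr rfl (fun g _ => hstep g)]
  rw [toPoly]
  have hmap : ∀ g : Fin m1 → Fin 2, g ∈ (univ : Finset (Fin m1 → Fin 2)) →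
      (univ.filter fun k => g k = 1).card ∈ range (m1 + 1) := by
    intro g _
    rw [Finset.mem_range]
    have := Finset.card_filter_le (univ : Finset (Fin m1)) (fun k => g k = 1)
    simp only [Finset.card_univ, Fintype.card_fin] at this
    omega
  rw [← Finset.sum_fiberwise_of_maps_to hmap
    (fun g => monomial (fm m1 ((univ.filter fun k => g k = 1).card)) (A i0 g))]
  apply Finset.sum_congr rfl
  intro j _
  rw [bCoeff, map_sum]
  apply Finset.sum_congr rfl
  intro g hg
  have : (univ.filter fun k => g k = 1).card = j := (Finset.mem_filter.mp hg).2
  rw [this]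

lemma tensor_transform {m1 : ℕ} (A At : Fin 2 → (Fin m1 → Fin 2) → ℂ)
    (Mc : Matrix (Fin 2) (Fin 2) ℂ)
    (hAt : ∀ i g, At i g = ∑ j : Fin 2, ∑ h : Fin m1 → Fin 2,
        (Mc i j * ∏ k, Mc (g k) (h k)) * A j h) (i0 : Fin 2) :
    toPoly m1 (bCoeff At i0)
      = ∑ j : Fin 2, C (Mc i0 j) * sub2 Mc (toPoly m1 (bCoeff A j)) := by
  rw [tensor_toPoly At i0]
  have hrhs : ∀ j : Fin 2, C (Mc i0 j) * sub2 Mc (toPoly m1 (bCoeff A j))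
      = ∑ h : Fin m1 → Fin 2, ∑ g : Fin m1 → Fin 2,
          C (Mc i0 j) * (C (A j h) * (C (∏ k, Mc (g k) (h k)) * ∏ k, X (g k))) := by
    intro j
    rw [tensor_toPoly A j, map_sum, Finset.mul_sum]
    apply Finset.sum_congr rfl
    intro h _
    rw [map_mul, algHom_C, algebraMap_eq, map_prod]
    have hX : ∀ k, sub2 Mc (X (h k)) = ∑ s : Fin 2, C (Mc s (h k)) * X s := fun k => sub2_X Mc (h k)
    rw [Finset.prod_congr rfl (fun k _ => hX k)]
    rw [Finset.prod_univ_sum]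
    rw [Fintype.piFinset_univ]
    rw [Finset.mul_sum, Finset.mul_sum]
    apply Finset.sum_congr rfl
    intro g _
    rw [Finset.prod_mul_distrib, ← map_prod C (fun k => Mc (g k) (h k))]
  rw [Finset.sum_congr rfl (fun j _ => hrhs j)]
  have hlhs : ∀ g : Fin m1 → Fin 2, C (At i0 g) * ∏ k, (X (g k) : MvPolynomial (Fin 2) ℂ)
      = ∑ j : Fin 2, ∑ h : Fin m1 → Fin 2,
          C (Mc i0 j) * (C (A j h) * (C (∏ k, Mc (g k) (h k)) * ∏ k, X (g k))) := by
    intro g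
    rw [hAt i0 g, map_sum, Finset.sum_mul]
    apply Finset.sum_congr rfl
    intro j _
    rw [map_sum, Finset.sum_mul]
    apply Finset.sum_congr rfl
    intro h _
    rw [map_mul, map_mul]
    ring
  rw [Finset.sum_congr rfl (fun g _ => hlhs g)]
  rw [Finset.sum_comm]
  apply Finset.sum_congr rfl
  intro j _
  rw [Finset.sum_comm]

lemma sylM_congr {d e : ℕ} (f f' g g' : ℕ → ℂ) (hf : ∀ j, j ≤ d → f j = f' j)
    (hg : ∀ j, j ≤ e → g j = g' j) : sylM d e f g = sylM d e f' g' := by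
  ext i j
  rw [sylM, sylM]
  by_cases h1 : (i : ℕ) < e
  · rw [if_pos h1, if_pos h1]
    by_cases h2 : (i : ℕ) ≤ (j : ℕ) ∧ (j : ℕ) ≤ (i : ℕ) + d
    · rw [if_pos h2, if_pos h2, hf _ (by omega)]
    · rw [if_neg h2, if_neg h2]
  · rw [if_neg h1, if_neg h1]
    by_cases h2 : (i : ℕ) - e ≤ (j : ℕ) ∧ (j : ℕ) ≤ ((i : ℕ) - e) + e
    · rw [if_pos h2, if_pos h2, hg _ (by omega)]
    · rw [if_neg h2, if_neg h2]
theorem aux_main {d : ℕ} (hd : 1 ≤ d)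
    (A At : Fin 2 → (Fin d → Fin 2) → ℂ) (Mc : Matrix (Fin 2) (Fin 2) ℂ)
    (hdet2 : Mc.det ^ 2 = 1)
    (hAt' : ∀ i g0, At i g0 = ∑ j : Fin 2, ∑ h : Fin d → Fin 2,
        (Mc i j * ∏ k, Mc (g0 k) (h k)) * A j h) :
    Res d d (bCoeff At 0) (bCoeff At 1) = Res d d (bCoeff A 0) (bCoeff A 1) := by
  have hdetne : Mc.det ≠ 0 := by
    intro h
    rw [h] at hdet2
    simp at hdet2
  have hcol : Mc 0 0 ≠ 0 ∨ Mc 1 0 ≠ 0 := by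
    by_contra hcon
    push_neg at hcon
    apply hdetne
    rw [Matrix.det_fin_two, hcon.1, hcon.2]
    ring
  have hDP : DetProp Mc := detProp_of_col_ne_zero hcol
  have htrans : ∀ i0 : Fin 2, toPoly d (bCoeff At i0)
      = MvPolynomial.C (Mc i0 0) * sub2 Mc (toPoly d (bCoeff A 0))
        + MvPolynomial.C (Mc i0 1) * sub2 Mc (toPoly d (bCoeff A 1)) := by
    intro i0
    rw [tensor_transform A At Mc hAt' i0, Fin.sum_univ_two]
  have hcoef : ∀ i0 : Fin 2, ∀ j, j ≤ d → bCoeff At i0 j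
      = Mc i0 0 * cvec d (sub2 Mc (toPoly d (bCoeff A 0))) j
        + Mc i0 1 * cvec d (sub2 Mc (toPoly d (bCoeff A 1))) j := by
    intro i0 j hj
    have h1 : bCoeff At i0 j = cvec d (toPoly d (bCoeff At i0)) j := (cvec_toPoly d _ hj).symm
    rw [h1, htrans i0]
    simp only [cvec, MvPolynomial.coeff_add, coeff_C_mul]
  have hsyl : sylM d d (bCoeff At 0) (bCoeff At 1)
      = sylM d d
          (fun j => Mc 0 0 * cvec d (sub2 Mc (toPoly d (bCoeff A 0))) j
            + Mc 0 1 * cvec d (sub2 Mc (toPoly d (bCoeff A 1))) j)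
          (fun j => Mc 1 0 * cvec d (sub2 Mc (toPoly d (bCoeff A 0))) j
            + Mc 1 1 * cvec d (sub2 Mc (toPoly d (bCoeff A 1))) j) :=
    sylM_congr _ _ _ _ (fun j hj => hcoef 0 j hj) (fun j hj => hcoef 1 j hj)
  rw [Res, Res, hsyl, mixing_det]
  have hdetM : Mc 0 0 * Mc 1 1 - Mc 0 1 * Mc 1 0 = Mc.det := (Matrix.det_fin_two Mc).symm
  rw [hdetM]
  have hsub := subst_det hd Mc (bCoeff A 0) (bCoeff A 1)
  have hT1 : (Tm d Mc).det = Mc.det ^ (∑ i ∈ range d, i) := hDP d hd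
  have hT2 : (Tm (d + d) Mc).det = Mc.det ^ (∑ i ∈ range (d + d), i) := hDP (d + d) (by omega)
  set T1 := ∑ i ∈ range d, i with hT1def
  set T2 := ∑ i ∈ range (d + d), i with hT2def
  have hgauss : T2 * 2 = (d + d) * (d + d - 1) := Finset.sum_range_id_mul_two (d + d)
  obtain ⟨e, he⟩ : ∃ e, d = e + 1 := ⟨d - 1, by omega⟩
  have hdd1 : d + d - 1 = 2 * e + 1 := by omega
  have hx : (d + d) * (d + d - 1) = 4 * (e * e) + 6 * e + 2 := by rw [hdd1, he]; ring
  rw [hx] at hgauss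
  have hdd2 : d * d = e * e + 2 * e + 1 := by rw [he]; ring
  have hdT2 : d + T2 = 2 * (d * d) := by
    rw [hdd2]
    set p := e * e with hp
    omega
  have h2 : (Tm d Mc).det ^ 2 = Mc.det ^ (2 * T1) := by
    rw [hT1, ← pow_mul, mul_comm]
  have hkey : Mc.det ^ (2 * T1) = 1 := by
    rw [pow_mul, hdet2, one_pow]
  rw [h2, hkey, hT2, one_mul] at hsub
  rw [hsub]
  calc Mc.det ^ d * ((sylM d d (bCoeff A 0) (bCoeff A 1)).det * Mc.det ^ T2)
      = Mc.det ^ (d + T2) * (sylM d d (bCoeff A 0) (bCoeff A 1)).det := by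
        rw [pow_add]; ring
    _ = (sylM d d (bCoeff A 0) (bCoeff A 1)).det := by
        rw [hdT2, pow_mul, hdet2, one_pow, one_mul]

/-- For `m ≥ 2`, an `m`th order 2-dimensional complex tensor `A`, and a real
orthogonal `2×2` matrix `C`, the resultant of the associated binary forms is invariant under
the orthonormal change of coordinates `ã_{i₁...i_m} = ∑ C_{i₁ j₁} ⋯ C_{i_m j_m} a_{j₁...j_m}`. -/
theorem stmt1 {m : ℕ} (hm : 2 ≤ m)
    (A At : Fin 2 → (Fin (m - 1) → Fin 2) → ℂ)
    (C : Matrix (Fin 2) (Fin 2) ℝ) (hC : C * C.transpose = 1)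
    (hAt : ∀ i g, At i g = ∑ j : Fin 2, ∑ h : Fin (m - 1) → Fin 2,
        ((C i j : ℂ) * ∏ k, (C (g k) (h k) : ℂ)) * A j h) :
    Res (m - 1) (m - 1) (bCoeff At 0) (bCoeff At 1)
      = Res (m - 1) (m - 1) (bCoeff A 0) (bCoeff A 1) := by
  have hd : 1 ≤ m - 1 := by omega
  set Mc : Matrix (Fin 2) (Fin 2) ℂ := fun i j => ((C i j : ℝ) : ℂ) with hMcdef
  have hCdet : C.det * C.det = 1 := by
    have h := congrArg Matrix.det hC
    rwa [Matrix.det_mul, Matrix.det_transpose, Matrix.det_one] at h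
  have hMcdet : Mc.det = ((C.det : ℝ) : ℂ) := by
    rw [Matrix.det_fin_two, Matrix.det_fin_two]
    push_cast
    rfl
  have hdet2 : Mc.det ^ 2 = 1 := by
    rw [hMcdet, sq, ← Complex.ofReal_mul, hCdet, Complex.ofReal_one]
  exact aux_main hd A At Mc hdet2 hAt
end
end
end

section
/- Let m = 2k+2 ≥ 4 be even and let A be a regular mth order 2-dimensional complex tensor. Then for every λ ∈ ℂ, ψ_A(λ) = det M_1(λ), where M_1(λ) is the (2m−2)×(2m−2) matrix described in the context. -/
open Finset

noncomputable section

/-- Coefficient sequence (in the binary-form variable index) of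
`G₁ = F₁ - λ (x₁² + x₂²)^{(m-2)/2} x₁`, a binary form of degree `m - 1`. -/
def g1c (m : ℕ) (A : Fin 2 → (Fin (m - 1) → Fin 2) → ℂ) (lam : ℂ) (i : ℕ) : ℂ :=
  bCoeff A 0 i - lam * (if i % 2 = 0 then (((m - 2) / 2).choose (i / 2) : ℂ) else 0)

/-- Coefficient sequence of `G₂ = F₂ - λ (x₁² + x₂²)^{(m-2)/2} x₂`. -/
def g2c (m : ℕ) (A : Fin 2 → (Fin (m - 1) → Fin 2) → ℂ) (lam : ℂ) (i : ℕ) : ℂ :=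
  bCoeff A 1 i - lam * (if i % 2 = 1 then (((m - 2) / 2).choose (i / 2) : ℂ) else 0)

/-- The E-characteristic polynomial `ψ_A(λ) = Res(G₁, G₂)` for even `m`, `n = 2`. -/
def psiEven (m : ℕ) (A : Fin 2 → (Fin (m - 1) → Fin 2) → ℂ) (lam : ℂ) : ℂ :=
  Res (m - 1) (m - 1) (g1c m A lam) (g2c m A lam)

/-- Coefficient sequence of the binary form `H = x₂ F₁ - x₁ F₂` of degree `m`; its
coefficients are `(-c₁, d₁, ..., d_{m-1}, b_m)` where `d_j = b_j - c_{j+1}`, `d_m = b_m`. -/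
def hCoeff (m : ℕ) (A : Fin 2 → (Fin (m - 1) → Fin 2) → ℂ) (r : ℕ) : ℂ :=
  if r = 0 then -bCoeff A 1 0
  else if r ≤ m - 1 then bCoeff A 0 (r - 1) - bCoeff A 1 r
  else if r = m then bCoeff A 0 (m - 1)
  else 0

/-- The `(2m-2) × (2m-2)` matrix `M₁(λ)` of Theorem `simpeven`: rows `1, ..., m-1`
(0-indexed `0, ..., m-2`) carry the shifted coefficients `(β₁, ..., β_m)` of `G₁`,
row `m` (0-indexed `m-1`) carries the coefficients `(γ₁, ..., γ_m)` of `G₂` in columns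
`m-1, ..., 2m-2`, and rows `m+j` for `1 ≤ j ≤ m-2` carry the shifted coefficients
`(-c₁, d₁, ..., d_{m-1}, b_m)` of `x₂F₁ - x₁F₂`. -/
def M1 (m : ℕ) (A : Fin 2 → (Fin (m - 1) → Fin 2) → ℂ) (lam : ℂ) :
    Matrix (Fin (2 * m - 2)) (Fin (2 * m - 2)) ℂ := fun i j =>
  if (i : ℕ) < m - 1 then
    (if (i : ℕ) ≤ (j : ℕ) ∧ (j : ℕ) ≤ (i : ℕ) + (m - 1) then
      g1c m A lam ((j : ℕ) - (i : ℕ)) else 0)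
  else if (i : ℕ) = m - 1 then
    (if m - 2 ≤ (j : ℕ) then g2c m A lam ((j : ℕ) - (m - 2)) else 0)
  else
    (if (i : ℕ) - m ≤ (j : ℕ) ∧ (j : ℕ) ≤ ((i : ℕ) - m) + m then
      hCoeff m A ((j : ℕ) - ((i : ℕ) - m)) else 0)

/-! ### Auxiliary lemmas for the proof of Statement 6 -/

lemma finRotate_inv_val {n : ℕ} (x : Fin (n + 1)) :
    (((finRotate (n + 1))⁻¹ x : Fin (n + 1)) : ℕ) = if (x : ℕ) = 0 then n else (x : ℕ) - 1 := by
  have h : finRotate (n + 1) ((finRotate (n + 1))⁻¹ x) = x := Equiv.apply_symm_apply _ _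
  rw [finRotate_succ_apply] at h
  set y := (finRotate (n + 1))⁻¹ x with hy
  have hv : ((y + 1 : Fin (n + 1)) : ℕ) = ((y : ℕ) + 1) % (n + 1) := by
    rw [Fin.val_add, Fin.val_one', Nat.add_mod_mod]
  have hx : (x : ℕ) = ((y : ℕ) + 1) % (n + 1) := by rw [← h, hv]
  have hyl : (y : ℕ) < n + 1 := y.isLt
  rcases Nat.lt_or_ge (y : ℕ) n with hlt | hge
  · have h1 : ((y : ℕ) + 1) % (n + 1) = (y : ℕ) + 1 := Nat.mod_eq_of_lt (by omega)
    rw [h1] at hx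
    rw [if_neg (by omega)]
    omega
  · have hyn : (y : ℕ) = n := by omega
    have h1 : ((y : ℕ) + 1) % (n + 1) = 0 := by rw [hyn]; simp
    rw [h1] at hx
    rw [if_pos (by omega)]
    omega

lemma bCoeff_high {m : ℕ} (A : Fin 2 → (Fin (m - 1) → Fin 2) → ℂ) (i0 : Fin 2) {i : ℕ}
    (hi : m - 1 < i) : bCoeff A i0 i = 0 := by
  unfold bCoeff
  rw [Finset.filter_false_of_mem, Finset.sum_empty]
  intro g _
  have h1 : (Finset.univ.filter fun k => g k = 1).card ≤ m - 1 := by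
    simpa using Finset.card_filter_le Finset.univ (fun k => g k = 1)
  omega

lemma hCoeff_zero {m : ℕ} (A : Fin 2 → (Fin (m - 1) → Fin 2) → ℂ) (lam : ℂ) :
    hCoeff m A 0 = -(g2c m A lam 0) := by simp [hCoeff, g2c]

lemma g2c_m {m : ℕ} (hme : Even m) (A : Fin 2 → (Fin (m - 1) → Fin 2) → ℂ) (lam : ℂ)
    (hm : 1 ≤ m) : g2c m A lam m = 0 := by
  have hm2 : m % 2 = 0 := Nat.even_iff.mp hme
  rw [g2c, bCoeff_high A 1 (by omega), if_neg (by omega)]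
  ring

lemma hCoeff_eq {m : ℕ} (hm : 4 ≤ m) (hme : Even m) (A : Fin 2 → (Fin (m - 1) → Fin 2) → ℂ)
    (lam : ℂ) {r : ℕ} (hr1 : 1 ≤ r) (hrm : r ≤ m) :
    hCoeff m A r = g1c m A lam (r - 1) - g2c m A lam r := by
  have hm2 : m % 2 = 0 := Nat.even_iff.mp hme
  unfold hCoeff g1c g2c
  by_cases h : r ≤ m - 1
  · rw [if_neg (by omega), if_pos h]
    have hXY : (if (r - 1) % 2 = 0 then ((((m - 2) / 2).choose ((r - 1) / 2) : ℕ) : ℂ) else 0)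
        = (if r % 2 = 1 then ((((m - 2) / 2).choose (r / 2) : ℕ) : ℂ) else 0) := by
      rcases Nat.even_or_odd r with he | ho
      · have h1 : r % 2 = 0 := Nat.even_iff.mp he
        rw [if_neg (by omega), if_neg (by omega)]
      · have h1 : r % 2 = 1 := Nat.odd_iff.mp ho
        rw [if_pos (by omega), if_pos (by omega)]
        have : (r - 1) / 2 = r / 2 := by omega
        rw [this]
    rw [hXY]
    ring
  · have hrm' : r = m := by omega
    subst hrm'
    rw [if_neg (by omega), if_neg (by omega), if_pos rfl,
      bCoeff_high A 1 (by omega), if_neg (by omega), if_neg (by omega)]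
    ring

/-- The lower-triangular matrix `E` implementing the row operations
`row (m-1+j) ↦ row j - row (m-1+j)` (for `1 ≤ j ≤ m-2`). -/
def Emat (m : ℕ) : Matrix (Fin (2 * m - 2)) (Fin (2 * m - 2)) ℂ := fun i j =>
  if (i : ℕ) < m then (if j = i then 1 else 0)
  else (if (j : ℕ) = (i : ℕ) - (m - 1) then (1 : ℂ) else 0) - (if j = i then 1 else 0)

lemma Emat_lowerTriangular (m : ℕ) (hm : 4 ≤ m) :
    (Emat m).BlockTriangular OrderDual.toDual := by
  intro i j hij
  have hij' : (i : ℕ) < (j : ℕ) := hij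
  unfold Emat
  by_cases h1 : (i : ℕ) < m
  · rw [if_pos h1, if_neg]
    intro h
    rw [h] at hij'
    omega
  · rw [if_neg h1, if_neg (by omega), if_neg (by intro h; rw [h] at hij'; omega)]
    ring

lemma Emat_det (m : ℕ) (hm : 4 ≤ m) (hme : Even m) : (Emat m).det = 1 := by
  rw [Matrix.det_of_lowerTriangular _ (Emat_lowerTriangular m hm)]
  have hdiag : ∀ i : Fin (2 * m - 2), Emat m i i = if (i : ℕ) < m then 1 else -1 := by
    intro i
    unfold Emat
    by_cases h1 : (i : ℕ) < m
    · rw [if_pos h1, if_pos rfl, if_pos h1]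
    · rw [if_neg h1, if_neg h1, if_neg (by omega), if_pos rfl]
      ring
  calc ∏ i : Fin (2 * m - 2), Emat m i i
      = ∏ i : Fin (2 * m - 2), (fun t : ℕ => if t < m then (1 : ℂ) else -1) (i : ℕ) :=
        Finset.prod_congr rfl (fun i _ => hdiag i)
    _ = ∏ t ∈ Finset.range (2 * m - 2), (if t < m then (1 : ℂ) else -1) := by
        exact Fin.prod_univ_eq_prod_range (fun t => if t < m then (1 : ℂ) else -1) _
    _ = 1 := by
        rw [Finset.prod_ite]
        have h2 : (Finset.range (2 * m - 2)).filter (fun t => ¬ t < m)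
            = Finset.Ico m (2 * m - 2) := by
          ext t
          simp [Finset.mem_Ico]
          omega
        rw [h2, Finset.prod_const, Finset.prod_const, Nat.card_Ico, one_pow, one_mul]
        have : Even (2 * m - 2 - m) := by
          have hm2 : m % 2 = 0 := Nat.even_iff.mp hme
          rw [Nat.even_iff]; omega
        exact Even.neg_one_pow this

/-- For even `m = 2k+2 ≥ 4` and a regular `m`th order 2-dimensional
complex tensor `A`, `ψ_A(λ) = det M₁(λ)` for every `λ ∈ ℂ`. -/
theorem stmt6 {m : ℕ} (hm : 4 ≤ m) (hme : Even m)
    (A : Fin 2 → (Fin (m - 1) → Fin 2) → ℂ) (hA : Regular A) (lam : ℂ) :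
    psiEven m A lam = (M1 m A lam).det := by
  clear hA
  have hm2 : m % 2 = 0 := Nat.even_iff.mp hme
  have h2 : 2 * m - 2 = (m - 1) + (m - 1) := by omega
  have hm1 : (m - 2) + 1 = m - 1 := by omega
  -- the rotation on the last block of rows
  set ρ : Equiv.Perm (Fin (m - 1)) :=
    (finCongr hm1).permCongr (finRotate ((m - 2) + 1))⁻¹ with hρdef
  have hρ : ∀ b : Fin (m - 1),
      ((ρ b : Fin (m - 1)) : ℕ) = if (b : ℕ) = 0 then m - 2 else (b : ℕ) - 1 := by
    intro b
    rw [hρdef]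
    simp [Equiv.permCongr_apply, finRotate_inv_val]
    rw [Fin.coe_sub_one]
    simp [Fin.ext_iff]
  set eS : (Fin (m - 1) ⊕ Fin (m - 1)) ≃ Fin (2 * m - 2) :=
    finSumFinEquiv.trans (finCongr h2.symm) with heSdef
  have heL : ∀ a : Fin (m - 1), ((eS (Sum.inl a) : Fin (2 * m - 2)) : ℕ) = (a : ℕ) := by
    intro a; rw [heSdef]; simp
  have heR : ∀ a : Fin (m - 1), ((eS (Sum.inr a) : Fin (2 * m - 2)) : ℕ) = (m - 1) + (a : ℕ) := by
    intro a; rw [heSdef]; simp; omega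
  set σ : Equiv.Perm (Fin (2 * m - 2)) :=
    eS.permCongr (Equiv.sumCongr (Equiv.refl (Fin (m - 1))) ρ) with hσdef
  have hσ : ∀ x : Fin (2 * m - 2), ((σ x : Fin (2 * m - 2)) : ℕ) =
      if (x : ℕ) < m - 1 then (x : ℕ)
      else if (x : ℕ) = m - 1 then 2 * m - 3 else (x : ℕ) - 1 := by
    intro x
    by_cases hx : (x : ℕ) < m - 1
    · have h1 : eS (Sum.inl ⟨(x : ℕ), hx⟩) = x := Fin.ext (heL _)
      have h1' : eS.symm x = Sum.inl ⟨(x : ℕ), hx⟩ := by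
        rw [Equiv.symm_apply_eq]; exact h1.symm
      have hs : σ x = eS (Sum.inl ⟨(x : ℕ), hx⟩) := by
        rw [hσdef, Equiv.permCongr_apply, h1']
        rfl
      rw [hs, if_pos hx]
      exact heL _
    · have hb : (x : ℕ) - (m - 1) < m - 1 := by have := x.isLt; omega
      have h1 : eS (Sum.inr ⟨(x : ℕ) - (m - 1), hb⟩) = x :=
        Fin.ext (by
          rw [heR]
          show (m - 1) + ((x : ℕ) - (m - 1)) = (x : ℕ)
          have := x.isLt; omega)
      have h1' : eS.symm x = Sum.inr ⟨(x : ℕ) - (m - 1), hb⟩ := by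
        rw [Equiv.symm_apply_eq]; exact h1.symm
      have hs : σ x = eS (Sum.inr (ρ ⟨(x : ℕ) - (m - 1), hb⟩)) := by
        rw [hσdef, Equiv.permCongr_apply, h1']
        rfl
      rw [hs, heR, hρ]
      have hval : ((⟨(x : ℕ) - (m - 1), hb⟩ : Fin (m - 1)) : ℕ) = (x : ℕ) - (m - 1) := rfl
      rw [hval]
      have := x.isLt
      split_ifs <;> omega
  have hsign : Equiv.Perm.sign σ = 1 := by
    have h1 : Equiv.Perm.sign σ
        = Equiv.Perm.sign (Equiv.sumCongr (Equiv.refl (Fin (m - 1))) ρ) := by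
      rw [hσdef]; exact Equiv.Perm.sign_permCongr eS _
    have h3 : Equiv.Perm.sign ρ = Equiv.Perm.sign ((finRotate ((m - 2) + 1))⁻¹) := by
      rw [hρdef]; exact Equiv.Perm.sign_permCongr (finCongr hm1) _
    rw [h1, Equiv.Perm.sign_sumCongr, Equiv.Perm.sign_refl, one_mul, h3,
      Equiv.Perm.sign_inv, sign_finRotate]
    exact Even.neg_one_pow (by rw [Nat.even_iff]; omega)
  -- the Sylvester matrix, reindexed over `Fin (2m-2)`
  set S2 : Matrix (Fin (2 * m - 2)) (Fin (2 * m - 2)) ℂ :=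
    (sylM (m - 1) (m - 1) (g1c m A lam) (g2c m A lam)).submatrix (finCongr h2) (finCongr h2)
    with hS2def
  have hS2det : S2.det = psiEven m A lam := by
    rw [hS2def, Matrix.det_submatrix_equiv_self]
    rfl
  have hS2e : ∀ x j : Fin (2 * m - 2), S2 x j =
      if (x : ℕ) < m - 1 then
        (if (x : ℕ) ≤ (j : ℕ) ∧ (j : ℕ) ≤ (x : ℕ) + (m - 1) then
          g1c m A lam ((j : ℕ) - (x : ℕ)) else 0)
      else
        (if (x : ℕ) - (m - 1) ≤ (j : ℕ) ∧ (j : ℕ) ≤ ((x : ℕ) - (m - 1)) + (m - 1) then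
          g2c m A lam ((j : ℕ) - ((x : ℕ) - (m - 1))) else 0) :=
    fun x j => rfl
  have key : M1 m A lam = Emat m * (S2.submatrix σ id) := by
    funext i j
    rw [Matrix.mul_apply]
    by_cases hi : (i : ℕ) < m
    · have hE : ∀ t : Fin (2 * m - 2), Emat m i t = if t = i then (1 : ℂ) else 0 := by
        intro t; unfold Emat; rw [if_pos hi]
      have hsum : ∑ t, Emat m i t * (S2.submatrix σ id) t j = S2 (σ i) j := by
        rw [Finset.sum_eq_single i]
        · rw [hE, if_pos rfl, one_mul]
          rfl
        · intro b _ hb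
          rw [hE, if_neg hb, zero_mul]
        · intro h; exact absurd (Finset.mem_univ i) h
      rw [hsum, hS2e]
      by_cases hi' : (i : ℕ) < m - 1
      · have hv : ((σ i : Fin (2 * m - 2)) : ℕ) = (i : ℕ) := by rw [hσ i, if_pos hi']
        rw [hv]
        simp only [M1]
        rw [if_pos hi', if_pos hi']
      · have hv : ((σ i : Fin (2 * m - 2)) : ℕ) = 2 * m - 3 := by
          rw [hσ i, if_neg hi', if_pos (by omega)]
        rw [hv]
        simp only [M1]
        rw [if_neg hi', if_pos (show (i : ℕ) = m - 1 by omega),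
          if_neg (show ¬ 2 * m - 3 < m - 1 by omega)]
        have h3 : 2 * m - 3 - (m - 1) = m - 2 := by omega
        rw [h3]
        by_cases hj : m - 2 ≤ (j : ℕ)
        · rw [if_pos hj, if_pos ⟨hj, by have := j.isLt; omega⟩]
        · rw [if_neg hj, if_neg (by intro hc; exact hj hc.1)]
    · have hb : (i : ℕ) - (m - 1) < 2 * m - 2 := by have := i.isLt; omega
      have hsum : ∑ t, Emat m i t * (S2.submatrix σ id) t j
          = S2 (σ ⟨(i : ℕ) - (m - 1), hb⟩) j - S2 (σ i) j := by
        have hterm : ∀ t : Fin (2 * m - 2), Emat m i t * (S2.submatrix σ id) t j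
            = (if (t : ℕ) = (i : ℕ) - (m - 1) then (1 : ℂ) else 0) * S2 (σ t) j
              - (if t = i then (1 : ℂ) else 0) * S2 (σ t) j := by
          intro t
          unfold Emat
          rw [if_neg hi, sub_mul]
          rfl
        rw [Finset.sum_congr rfl (fun t _ => hterm t), Finset.sum_sub_distrib]
        congr 1
        · rw [Finset.sum_eq_single (⟨(i : ℕ) - (m - 1), hb⟩ : Fin (2 * m - 2))]
          · rw [if_pos rfl, one_mul]
          · intro b _ hb2
            rw [if_neg (fun hc => hb2 (Fin.ext hc)), zero_mul]
          · intro h; exact absurd (Finset.mem_univ _) h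
        · rw [Finset.sum_eq_single i]
          · rw [if_pos rfl, one_mul]
          · intro b _ hb2
            rw [if_neg hb2, zero_mul]
          · intro h; exact absurd (Finset.mem_univ _) h
      rw [hsum]
      have hil := i.isLt
      have hv0 : ((σ (⟨(i : ℕ) - (m - 1), hb⟩ : Fin (2 * m - 2)) : Fin (2 * m - 2)) : ℕ)
          = (i : ℕ) - (m - 1) := by
        rw [hσ]
        have hval : ((⟨(i : ℕ) - (m - 1), hb⟩ : Fin (2 * m - 2)) : ℕ) = (i : ℕ) - (m - 1) := rfl
        rw [hval, if_pos (by omega)]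
      have hv1 : ((σ i : Fin (2 * m - 2)) : ℕ) = (i : ℕ) - 1 := by
        rw [hσ i, if_neg (by omega), if_neg (by omega)]
      rw [hS2e, hS2e, hv0, hv1]
      rw [if_pos (show (i : ℕ) - (m - 1) < m - 1 by omega),
        if_neg (show ¬ (i : ℕ) - 1 < m - 1 by omega)]
      simp only [M1]
      rw [if_neg (by omega : ¬ (i : ℕ) < m - 1), if_neg (by omega : ¬ (i : ℕ) = m - 1)]
      have e1 : (i : ℕ) - (m - 1) = ((i : ℕ) - m) + 1 := by omega
      have e2 : (i : ℕ) - 1 - (m - 1) = (i : ℕ) - m := by omega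
      rw [e1, e2]
      have hjl := j.isLt
      by_cases hj1 : (j : ℕ) < (i : ℕ) - m
      · rw [if_neg (by omega), if_neg (by omega), if_neg (by omega)]
        ring
      · by_cases hj2 : (j : ℕ) = (i : ℕ) - m
        · rw [if_pos (by omega), if_neg (by omega), if_pos (by omega)]
          have h4 : (j : ℕ) - ((i : ℕ) - m) = 0 := by omega
          rw [h4, hCoeff_zero A lam]
          ring
        · by_cases hj3 : (j : ℕ) ≤ ((i : ℕ) - m) + (m - 1)
          · rw [if_pos (by omega), if_pos (by omega), if_pos (by omega)]
            have h4 : (j : ℕ) - (((i : ℕ) - m) + 1) = ((j : ℕ) - ((i : ℕ) - m)) - 1 := by omega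
            rw [h4, hCoeff_eq hm hme A lam (by omega) (by omega)]
          · by_cases hj4 : (j : ℕ) = ((i : ℕ) - m) + m
            · rw [if_pos (by omega), if_pos (by omega), if_neg (by omega)]
              have h4 : (j : ℕ) - ((i : ℕ) - m) = m := by omega
              have h5 : (j : ℕ) - (((i : ℕ) - m) + 1) = m - 1 := by omega
              rw [h4, h5, hCoeff_eq hm hme A lam (by omega) (le_refl m),
                g2c_m hme A lam (by omega)]
            · rw [if_neg (by omega), if_neg (by omega), if_neg (by omega)]
              ring
  rw [← hS2det, key, Matrix.det_mul, Emat_det m hm hme, one_mul, Matrix.det_permute, hsign]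
  simp
end
end

section
/- Let m ≥ 4 be even and let A be a regular mth order 2-dimensional complex tensor. Let G_1 = F_1 − λ(x_1²+x_2²)^{(m−2)/2} x_1 (a binary form of degree m−1) and let H = x_2 F_1 − x_1 F_2 (a binary form of degree m). Then for every λ ∈ ℂ, Res(G_1, H) = b_m · ψ_A(λ), where b_m = a_{12...2}. -/
open Finset

noncomputable section

variable {R : Type*} [CommRing R]

lemma det_row_sub {n : ℕ} (M : Matrix (Fin n) (Fin n) R) (σ : Fin n → Fin n)
    (p : Fin n → Prop) [DecidablePred p] (hσ : ∀ i, p i → σ i < i) :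
    (Matrix.of fun i j => if p i then M i j - M (σ i) j else M i j).det = M.det := by
  set E : Matrix (Fin n) (Fin n) R :=
    Matrix.of fun i k => (if k = i then (1:R) else 0) +
      (if p i ∧ k = σ i then (-1:R) else 0) with hE
  have hmul : (Matrix.of fun i j => if p i then M i j - M (σ i) j else M i j) = E * M := by
    ext i j
    simp only [Matrix.mul_apply, hE, Matrix.of_apply, add_mul, ite_mul, one_mul, zero_mul,
      neg_mul, neg_zero]
    rw [Finset.sum_add_distrib, Finset.sum_ite_eq' univ i (fun k => M k j)]
    by_cases hp : p i
    · simp only [hp, true_and, mem_univ, if_true]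
      rw [Finset.sum_ite_eq' univ (σ i) (fun k => -M k j)]
      simp [sub_eq_add_neg]
    · simp [hp]
  have hdetE : E.det = 1 := by
    have htri : E.BlockTriangular OrderDual.toDual := by
      intro i j hij
      have hij' : (i : Fin n) < j := hij
      simp only [hE, Matrix.of_apply]
      rw [if_neg (fun h => absurd (h ▸ hij') (lt_irrefl _)), if_neg, add_zero]
      rintro ⟨hpi, rfl⟩
      exact absurd (lt_trans (hσ i hpi) hij') (lt_irrefl _)
    rw [Matrix.det_of_lowerTriangular E htri]
    have : ∀ i : Fin n, E i i = 1 := by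
      intro i
      have h2 : ¬(p i ∧ i = σ i) := by
        rintro ⟨hpi, hieq⟩
        exact absurd (hσ i hpi) (by rw [← hieq]; exact lt_irrefl _)
      simp [hE, h2]
    simp [this]
  rw [hmul, Matrix.det_mul, hdetE, one_mul]

lemma key (d : ℕ) (hd : 1 ≤ d) (f g : ℕ → R) (hg : g (d+1) = 0) :
    Res d (d+1) f (fun r => (if r = 0 then 0 else f (r-1)) - g r) =
      f d * Res d d f g := by
  set h : ℕ → R := fun r => (if r = 0 then 0 else f (r-1)) - g r with hh
  set M : Matrix (Fin (d + (d+1))) (Fin (d + (d+1))) R := sylM d (d+1) f h with hM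
  set p : Fin (d + (d+1)) → Prop := fun i => d + 1 ≤ (i : ℕ) with hp
  set σ : Fin (d + (d+1)) → Fin (d + (d+1)) :=
    fun i => ⟨(i : ℕ) - d, lt_of_le_of_lt (Nat.sub_le _ _) i.isLt⟩ with hσdef
  have hσ : ∀ i, p i → σ i < i := by
    intro i hi
    have := i.isLt
    simp only [hσdef, Fin.lt_iff_val_lt_val]
    simp only [hp] at hi
    omega
  set M3 : Matrix (Fin (d + (d+1))) (Fin (d + (d+1))) R := Matrix.of fun i j =>
    if (i : ℕ) < d + 1 then
      (if (i : ℕ) ≤ (j : ℕ) ∧ (j : ℕ) ≤ (i : ℕ) + d then f ((j : ℕ) - (i : ℕ)) else 0)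
    else
      (if (i : ℕ) - (d+1) ≤ (j : ℕ) ∧ (j : ℕ) ≤ ((i : ℕ) - (d+1)) + (d+1)
        then g ((j : ℕ) - ((i : ℕ) - (d+1))) else 0) with hM3
  have hN : (Matrix.of fun i j => if p i then M i j - M (σ i) j else M i j)
      = Matrix.of fun i j => (if p i then (-1 : R) else 1) * M3 i j := by
    ext i j
    have hi := i.isLt
    have hj := j.isLt
    by_cases hpi : p i
    · have hpi' : d + 1 ≤ (i : ℕ) := hpi
      have e1 : M i j = (if (i:ℕ) - (d+1) ≤ (j:ℕ) ∧ (j:ℕ) ≤ ((i:ℕ)-(d+1)) + (d+1)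
          then h ((j:ℕ) - ((i:ℕ)-(d+1))) else 0) := by
        simp only [hM, sylM]; rw [if_neg (by omega)]
      have e2 : M (σ i) j = (if (i:ℕ) - d ≤ (j:ℕ) ∧ (j:ℕ) ≤ ((i:ℕ) - d) + d
          then f ((j:ℕ) - ((i:ℕ) - d)) else 0) := by
        simp only [hM, sylM]
        rw [if_pos (by have : ((σ i : Fin (d + (d+1))) : ℕ) = (i:ℕ) - d := rfl; omega)]
      have e3 : M3 i j = (if (i:ℕ)-(d+1) ≤ (j:ℕ) ∧ (j:ℕ) ≤ ((i:ℕ)-(d+1)) + (d+1)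
          then g ((j:ℕ) - ((i:ℕ)-(d+1))) else 0) := by
        simp only [hM3, Matrix.of_apply]; rw [if_neg (by omega)]
      rw [Matrix.of_apply, Matrix.of_apply, if_pos hpi, if_pos hpi, e1, e2, e3]
      set t := (i:ℕ) - (d+1) with ht
      have htd : (i:ℕ) - d = t + 1 := by omega
      rw [htd]
      simp only [hh]
      by_cases h1 : t ≤ (j:ℕ) ∧ (j:ℕ) ≤ t + (d+1)
      · rw [if_pos h1, if_pos h1]
        by_cases h2 : (j:ℕ) = t
        · rw [if_neg (show ¬(t+1 ≤ (j:ℕ) ∧ (j:ℕ) ≤ t+1+d) by omega),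
            if_pos (by omega : (j:ℕ) - t = 0)]
          ring
        · rw [if_neg (show ¬((j:ℕ) - t = 0) by omega), if_pos (show t+1 ≤ (j:ℕ) ∧ (j:ℕ) ≤ t+1+d by omega)]
          have harg : (j:ℕ) - t - 1 = (j:ℕ) - (t+1) := by omega
          rw [harg]
          ring
      · rw [if_neg h1, if_neg h1,
          if_neg (show ¬(t+1 ≤ (j:ℕ) ∧ (j:ℕ) ≤ t+1+d) by omega)]
        ring
    · have hpi' : ¬ (d + 1 ≤ (i : ℕ)) := hpi
      have e1 : M i j = (if (i:ℕ) ≤ (j:ℕ) ∧ (j:ℕ) ≤ (i:ℕ) + d then f ((j:ℕ) - (i:ℕ)) else 0) := by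
        simp only [hM, sylM]; rw [if_pos (by omega)]
      have e3 : M3 i j = (if (i:ℕ) ≤ (j:ℕ) ∧ (j:ℕ) ≤ (i:ℕ) + d then f ((j:ℕ) - (i:ℕ)) else 0) := by
        simp only [hM3, Matrix.of_apply]; rw [if_pos (by omega)]
      rw [Matrix.of_apply, Matrix.of_apply, if_neg hpi, if_neg hpi, e1, e3, one_mul]
  have hdetN : M.det = ((-1:R))^d * M3.det := by
    rw [← det_row_sub M σ p hσ, hN]
    have hD : (Matrix.of fun i j => (if p i then (-1:R) else 1) * M3 i j)
        = Matrix.diagonal (fun i => if p i then (-1:R) else 1) * M3 := by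
      ext i j
      simp [Matrix.diagonal_mul]
    rw [hD, Matrix.det_mul, Matrix.det_diagonal]
    congr 1
    have : ∀ i : Fin (d + (d+1)), (if p i then (-1:R) else 1)
        = (fun k : ℕ => if d + 1 ≤ k then (-1:R) else 1) (i : ℕ) := fun i => rfl
    rw [Finset.prod_congr rfl (fun i _ => this i),
      Fin.prod_univ_eq_prod_range (fun k => if d + 1 ≤ k then (-1:R) else 1)]
    rw [Finset.prod_ite, Finset.prod_const, Finset.prod_const_one, mul_one]
    congr 1
    rw [show (Finset.range (d+(d+1))).filter (fun i => d+1 ≤ i) = Finset.Ico (d+1) (d+(d+1))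
      from by ext x; simp [Finset.mem_Ico, Finset.mem_filter, Finset.mem_range]; omega]
    rw [Nat.card_Ico]
    omega
  have hentry : M3 (⟨d, by omega⟩ : Fin (d+d+1)) (Fin.last (d+d)) = f d := by
    simp only [hM3, Matrix.of_apply]
    rw [if_pos (by norm_num)]
    rw [if_pos (show (d : ℕ) ≤ ((Fin.last (d+d)) : ℕ) ∧ ((Fin.last (d+d)) : ℕ) ≤ d + d by
      simp [Fin.last])]
    congr 1
    simp [Fin.last]
  have hsub : M3.submatrix (Fin.succAbove (⟨d, by omega⟩ : Fin (d+d+1)))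
      (Fin.succAbove (Fin.last (d+d))) = sylM d d f g := by
    ext i j
    have hi2 := i.isLt
    have hj2 := j.isLt
    have hcol : (((Fin.last (d+d)).succAbove j) : ℕ) = (j : ℕ) := by
      rw [Fin.succAbove_last, Fin.coe_castSucc]
    by_cases hir : (i : ℕ) < d
    · have hrow : ((Fin.succAbove (⟨d, by omega⟩ : Fin (d+d+1)) i) : ℕ) = (i : ℕ) := by
        rw [Fin.succAbove_of_castSucc_lt, Fin.coe_castSucc]
        simpa [Fin.lt_def] using hir
      have hL : M3.submatrix (Fin.succAbove (⟨d, by omega⟩ : Fin (d+d+1)))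
          (Fin.succAbove (Fin.last (d+d))) i j
          = (if (i:ℕ) ≤ (j:ℕ) ∧ (j:ℕ) ≤ (i:ℕ) + d then f ((j:ℕ) - (i:ℕ)) else 0) := by
        simp only [Matrix.submatrix_apply, hM3, Matrix.of_apply, hrow, hcol]
        rw [if_pos (by omega)]
      have hR : sylM d d f g i j
          = (if (i:ℕ) ≤ (j:ℕ) ∧ (j:ℕ) ≤ (i:ℕ) + d then f ((j:ℕ) - (i:ℕ)) else 0) := by
        simp only [sylM]
        rw [if_pos (by omega)]
      rw [hL, hR]
    · have hrow : ((Fin.succAbove (⟨d, by omega⟩ : Fin (d+d+1)) i) : ℕ) = (i : ℕ) + 1 := by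
        rw [Fin.succAbove_of_le_castSucc, Fin.val_succ]
        simp only [Fin.le_def, Fin.coe_castSucc]
        omega
      have hL : M3.submatrix (Fin.succAbove (⟨d, by omega⟩ : Fin (d+d+1)))
          (Fin.succAbove (Fin.last (d+d))) i j
          = (if (i:ℕ) - d ≤ (j:ℕ) ∧ (j:ℕ) ≤ ((i:ℕ) - d) + (d+1)
              then g ((j:ℕ) - ((i:ℕ) - d)) else 0) := by
        simp only [Matrix.submatrix_apply, hM3, Matrix.of_apply, hrow, hcol]
        rw [if_neg (by omega)]
        have ht : (i:ℕ) + 1 - (d+1) = (i:ℕ) - d := by omega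
        rw [ht]
      have hR : sylM d d f g i j
          = (if (i:ℕ) - d ≤ (j:ℕ) ∧ (j:ℕ) ≤ ((i:ℕ) - d) + d
              then g ((j:ℕ) - ((i:ℕ) - d)) else 0) := by
        simp only [sylM]
        rw [if_neg (by omega)]
      rw [hL, hR]
      by_cases hA : (i:ℕ) - d ≤ (j:ℕ) ∧ (j:ℕ) ≤ (i:ℕ) - d + (d+1)
      · rw [if_pos hA]
        by_cases hB : (j:ℕ) ≤ (i:ℕ) - d + d
        · rw [if_pos ⟨hA.1, hB⟩]
        · rw [if_neg (by omega)]
          have : (j:ℕ) - ((i:ℕ) - d) = d + 1 := by omega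
          rw [this, hg]
      · rw [if_neg hA, if_neg (by omega)]
  have expand : M3.det = ∑ i1 : Fin (d+d+1),
      (-1:R)^((i1:ℕ) + ((Fin.last (d+d)):ℕ)) * M3 i1 (Fin.last (d+d)) *
        (M3.submatrix i1.succAbove (Fin.last (d+d)).succAbove).det :=
    Matrix.det_succ_column (n := d + d) M3 (Fin.last (d+d))
  rw [Finset.sum_eq_single (⟨d, by omega⟩ : Fin (d+d+1))] at expand
  · rw [hentry, hsub] at expand
    have hsign : ((-1:R))^d * (-1:R)^(((⟨d, by omega⟩ : Fin (d+d+1)):ℕ) + ((Fin.last (d+d)):ℕ)) = 1 := by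
      rw [← pow_add]
      rw [show d + (((⟨d, by omega⟩ : Fin (d+d+1)):ℕ) + ((Fin.last (d+d)):ℕ)) = 4 * d by
        simp [Fin.last]; omega]
      rw [pow_mul]
      norm_num
    calc Res d (d+1) f h = M.det := rfl
      _ = (-1:R)^d * ((-1:R)^(((⟨d, by omega⟩ : Fin (d+d+1)):ℕ) + ((Fin.last (d+d)):ℕ))
            * f d * (sylM d d f g).det) := by rw [hdetN, expand]
      _ = ((-1:R)^d * (-1:R)^(((⟨d, by omega⟩ : Fin (d+d+1)):ℕ) + ((Fin.last (d+d)):ℕ)))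
            * (f d * (sylM d d f g).det) := by ring
      _ = f d * Res d d f g := by rw [hsign, one_mul]; rfl
  · intro b _ hb
    have hbv : (b : ℕ) ≠ d := fun hc => hb (Fin.ext hc)
    have hb2 := b.isLt
    have hzero : M3 b (Fin.last (d+d)) = 0 := by
      simp only [hM3, Matrix.of_apply]
      by_cases hbr : (b : ℕ) < d + 1
      · rw [if_pos hbr, if_neg (by simp only [Fin.val_last]; omega)]
      · rw [if_neg hbr]
        by_cases hbl : (b : ℕ) = d + d
        · rw [if_pos (by simp only [Fin.val_last]; omega)]
          have : ((Fin.last (d+d)) : ℕ) - ((b:ℕ) - (d+1)) = d + 1 := by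
            simp only [Fin.val_last]; omega
          rw [this, hg]
        · rw [if_neg (by simp only [Fin.val_last]; omega)]
    rw [hzero]
    ring
  · intro hmem
    exact absurd (Finset.mem_univ _) hmem

lemma bCoeff_eq_zero {m1 : ℕ} (A : Fin 2 → (Fin m1 → Fin 2) → ℂ) (i0 : Fin 2)
    {i : ℕ} (hi : m1 < i) : bCoeff A i0 i = 0 := by
  unfold bCoeff
  rw [Finset.filter_eq_empty_iff.mpr, Finset.sum_empty]
  intro g _
  intro hc
  have h1 : (univ.filter fun k => g k = 1).card ≤ (univ : Finset (Fin m1)).card :=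
    Finset.card_filter_le _ _
  rw [hc, Finset.card_univ, Fintype.card_fin] at h1
  omega


/-- For even `m ≥ 4` and a regular `m`th order 2-dimensional complex
tensor `A`: with `G₁ = F₁ - λ(x₁²+x₂²)^{(m-2)/2}x₁` (degree `m-1`) and
`H = x₂F₁ - x₁F₂` (degree `m`), one has `Res(G₁, H) = b_m · ψ_A(λ)` for every `λ`,
where `b_m = a_{12...2}`. -/
theorem stmt7 {m : ℕ} (hm : 4 ≤ m) (hme : Even m)
    (A : Fin 2 → (Fin (m - 1) → Fin 2) → ℂ) (hA : Regular A) (lam : ℂ) :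
    Res (m - 1) m (g1c m A lam) (hCoeff m A) = bCoeff A 0 (m - 1) * psiEven m A lam := by
  have hm2 : m % 2 = 0 := Nat.even_iff.mp hme
  have h1 : m - 1 + 1 = m := by omega
  have hg : g2c m A lam ((m - 1) + 1) = 0 := by
    rw [h1]
    unfold g2c
    rw [bCoeff_eq_zero A 1 (by omega), if_neg (by omega)]
    ring
  have hH : hCoeff m A
      = fun r => (if r = 0 then 0 else g1c m A lam (r - 1)) - g2c m A lam r := by
    funext r
    unfold hCoeff g1c g2c
    by_cases hr0 : r = 0
    · subst hr0
      rw [if_pos rfl, if_pos rfl, if_neg (by omega)]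
      ring
    · rw [if_neg hr0, if_neg hr0]
      by_cases hr1 : r ≤ m - 1
      · rw [if_pos hr1]
        by_cases hodd : r % 2 = 1
        · rw [if_pos hodd, if_pos (by omega)]
          have : (r - 1) / 2 = r / 2 := by omega
          rw [this]
          ring
        · rw [if_neg hodd, if_neg (by omega)]
          ring
      · rw [if_neg hr1]
        by_cases hrm : r = m
        · subst hrm
          rw [if_pos rfl, if_neg (by omega), if_neg (by omega)]
          rw [bCoeff_eq_zero A 1 (by omega)]
          ring
        · rw [if_neg hrm]
          rw [bCoeff_eq_zero A 0 (show m - 1 < r - 1 by omega),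
            bCoeff_eq_zero A 1 (show m - 1 < r by omega)]
          by_cases he : r % 2 = 1
          · rw [if_pos (show (r - 1) % 2 = 0 by omega), if_pos he,
              Nat.choose_eq_zero_of_lt (show (m - 2) / 2 < (r - 1) / 2 by omega),
              Nat.choose_eq_zero_of_lt (show (m - 2) / 2 < r / 2 by omega)]
            norm_num
          · rw [if_neg (show ¬((r - 1) % 2 = 0) by omega), if_neg he]
            norm_num
  have hkey := key (m - 1) (by omega) (g1c m A lam) (g2c m A lam) hg
  rw [h1] at hkey
  rw [hH, hkey]
  have hlead : g1c m A lam (m - 1) = bCoeff A 0 (m - 1) := by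
    unfold g1c
    rw [if_neg (by omega)]
    ring
  rw [hlead]
  rfl
end
end

section
/- Let F_1, F_2 ∈ ℂ[x_0, x_1, x_2] be homogeneous of degrees d_1 ≥ 1 and d_2 ≥ 1. If the set of common zeros of F_1 and F_2 in the complex projective plane ℂℙ² is infinite, then there exist indices s ≠ t in {0,1,2} such that Res^{s,t}(z) = 0 for all z ∈ ℂ, i.e. Res^{s,t} vanishes identically as a polynomial in z. -/
open Finset

noncomputable section

/-- `Res^{s,t}(z)`: substitute `y_j` for `x_j` (`j ≠ s`) and `z·y_t` for `x_s` in the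
homogeneous ternary forms `F₁, F₂` of degrees `d₁, d₂`; the results are binary forms in
the two variables `y_u, y_v` (`{u, v} = {0,1,2} \ {s}`, `u < v`), and `Res^{s,t}(z)` is
their resultant. -/
def resST (d1 d2 : ℕ) (F1 F2 : MvPolynomial (Fin 3) ℂ) (s t : Fin 3) (z : ℂ) : ℂ :=
  let u : Fin 3 := if s = 0 then 1 else 0
  let v : Fin 3 := if s = 2 then 1 else 2
  let sub : MvPolynomial (Fin 3) ℂ → MvPolynomial (Fin 3) ℂ := fun F =>
    MvPolynomial.aeval
      (fun j : Fin 3 => if j = s then MvPolynomial.C z * MvPolynomial.X t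
        else MvPolynomial.X j) F
  Res d1 d2
    (fun i => MvPolynomial.coeff (Finsupp.single u (d1 - i) + Finsupp.single v i) (sub F1))
    (fun i => MvPolynomial.coeff (Finsupp.single u (d2 - i) + Finsupp.single v i) (sub F2))

namespace Stmt10Aux

open MvPolynomial

lemma rowSum (f : ℕ → ℂ) (d N i0 : ℕ) (h : i0 + d + 1 ≤ N) (a b : ℂ) :
    ∑ j ∈ Finset.range N,
      (if i0 ≤ j ∧ j ≤ i0 + d then f (j - i0) else 0) * (a ^ (N - 1 - j) * b ^ j)
      = (∑ k ∈ Finset.range (d + 1), f k * a ^ (d - k) * b ^ k)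
          * (a ^ (N - 1 - (i0 + d)) * b ^ i0) := by
  have h1 : ∀ j ∈ Finset.range N,
      (if i0 ≤ j ∧ j ≤ i0 + d then f (j - i0) else 0) * (a ^ (N - 1 - j) * b ^ j)
      = (if i0 ≤ j ∧ j ≤ i0 + d then f (j - i0) * (a ^ (N - 1 - j) * b ^ j) else 0) := by
    intro j _; split_ifs <;> simp
  rw [Finset.sum_congr rfl h1, ← Finset.sum_filter]
  have h2 : (Finset.range N).filter (fun j => i0 ≤ j ∧ j ≤ i0 + d) = Finset.Icc i0 (i0 + d) := by
    ext j; simp only [Finset.mem_filter, Finset.mem_range, Finset.mem_Icc]; omega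
  rw [h2]
  have h3 : Finset.Icc i0 (i0 + d) = Finset.Ico i0 (i0 + d + 1) := by
    rw [Nat.Icc_eq_range', Nat.Ico_eq_range']
  rw [h3, Finset.sum_Ico_eq_sum_range, Finset.sum_mul]
  have h4 : i0 + d + 1 - i0 = d + 1 := by omega
  rw [h4]
  refine Finset.sum_congr rfl fun k hk => ?_
  have hk' : k ≤ d := by simpa using Nat.lt_succ_iff.mp (Finset.mem_range.mp hk)
  have e1 : i0 + k - i0 = k := by omega
  have e2 : N - 1 - (i0 + k) = (d - k) + (N - 1 - (i0 + d)) := by omega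
  have e3 : i0 + k = k + i0 := by omega
  rw [e1, e2, e3, pow_add, pow_add]
  ring

lemma res_eq_zero {d e : ℕ} (hd : 1 ≤ d) (he : 1 ≤ e) (f g : ℕ → ℂ) (a b : ℂ)
    (hab : ¬(a = 0 ∧ b = 0))
    (hf : ∑ k ∈ Finset.range (d + 1), f k * a ^ (d - k) * b ^ k = 0)
    (hg : ∑ k ∈ Finset.range (e + 1), g k * a ^ (e - k) * b ^ k = 0) :
    Res d e f g = 0 := by
  have hde : 0 < d + e := by omega
  rw [Res, ← Matrix.exists_mulVec_eq_zero_iff]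
  refine ⟨fun j => a ^ (d + e - 1 - (j : ℕ)) * b ^ (j : ℕ), ?_, ?_⟩
  · intro hv
    by_cases ha : a = 0
    · have hb : b ≠ 0 := fun hb => hab ⟨ha, hb⟩
      have := congr_fun hv ⟨d + e - 1, by omega⟩
      simp only [Pi.zero_apply] at this
      have : a ^ (d + e - 1 - (d + e - 1)) * b ^ (d + e - 1) = 0 := this
      rw [Nat.sub_self, pow_zero, one_mul] at this
      exact hb ((pow_eq_zero_iff (n := d + e - 1) (by omega)).mp this)
    · have := congr_fun hv ⟨0, hde⟩
      simp only [Pi.zero_apply] at this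
      have : a ^ (d + e - 1 - 0) * b ^ 0 = 0 := this
      rw [Nat.sub_zero, pow_zero, mul_one] at this
      exact ha ((pow_eq_zero_iff (n := d + e - 1) (by omega)).mp this)
  · funext i
    show ∑ j, sylM d e f g i j * (a ^ (d + e - 1 - (j : ℕ)) * b ^ (j : ℕ)) = 0
    by_cases hi : (i : ℕ) < e
    · have : ∀ j : Fin (d + e), sylM d e f g i j
          = (if (i : ℕ) ≤ (j : ℕ) ∧ (j : ℕ) ≤ (i : ℕ) + d then f ((j : ℕ) - (i : ℕ)) else 0) := by
        intro j; simp only [sylM, if_pos hi]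
      simp only [this]
      rw [Fin.sum_univ_eq_sum_range (fun j =>
        (if (i : ℕ) ≤ j ∧ j ≤ (i : ℕ) + d then f (j - (i : ℕ)) else 0)
          * (a ^ (d + e - 1 - j) * b ^ j)) (d + e)]
      rw [rowSum f d (d + e) (i : ℕ) (by omega) a b, hf, zero_mul]
    · have : ∀ j : Fin (d + e), sylM d e f g i j
          = (if (i : ℕ) - e ≤ (j : ℕ) ∧ (j : ℕ) ≤ ((i : ℕ) - e) + e
              then g ((j : ℕ) - ((i : ℕ) - e)) else 0) := by
        intro j; simp only [sylM, if_neg hi]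
      simp only [this]
      rw [Fin.sum_univ_eq_sum_range (fun j =>
        (if (i : ℕ) - e ≤ j ∧ j ≤ ((i : ℕ) - e) + e then g (j - ((i : ℕ) - e)) else 0)
          * (a ^ (d + e - 1 - j) * b ^ j)) (d + e)]
      have hie : (i : ℕ) - e + e + 1 ≤ d + e := by
        have := i.isLt; omega
      rw [rowSum g e (d + e) ((i : ℕ) - e) hie a b, hg, zero_mul]

def gz (s t : Fin 3) (z : ℂ) : Fin 3 → MvPolynomial (Fin 3) ℂ :=
  fun j => if j = s then C z * X t else X j

def gP (s t : Fin 3) : Fin 3 → MvPolynomial (Fin 3) (Polynomial ℂ) :=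
  fun j => if j = s then C Polynomial.X * X t else X j

lemma map_subP (s t : Fin 3) (z : ℂ) (F : MvPolynomial (Fin 3) ℂ) :
    MvPolynomial.map (Polynomial.evalRingHom z)
      (aeval (gP s t) (MvPolynomial.map Polynomial.C F)) = aeval (gz s t z) F := by
  induction F using MvPolynomial.induction_on with
  | C a => simp [gz, gP, algebraMap_eq]
  | add p q hp hq => rw [map_add, map_add, map_add, hp, hq, map_add]
  | mul_X p j hp =>
      simp only [map_mul, MvPolynomial.map_X, aeval_X, hp]
      congr 1
      by_cases h : j = s <;> simp [gP, gz, h]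

lemma eval_aeval' (y : Fin 3 → ℂ) (g : Fin 3 → MvPolynomial (Fin 3) ℂ)
    (F : MvPolynomial (Fin 3) ℂ) :
    eval y (aeval g F) = eval (fun j => eval y (g j)) F := by
  have hAE : ∀ (f : Fin 3 → ℂ) (p : MvPolynomial (Fin 3) ℂ), aeval f p = eval f p := by
    intro f p
    rw [← coe_aeval_eq_eval]
    rfl
  have this' : aeval y (aeval g F) = aeval (fun i => aeval y (g i)) F :=
    aeval_bind₁ (S := ℂ) y g F
  rw [← hAE, this']
  simp only [hAE]

lemma sub_homog {F : MvPolynomial (Fin 3) ℂ} {d : ℕ} (hF : F.IsHomogeneous d)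
    (s t : Fin 3) (z : ℂ) : (aeval (gz s t z) F).IsHomogeneous d := by
  have := hF.aeval (gz s t z) (n := 1) fun i => by
    by_cases h : i = s
    · simp only [gz, h, if_pos rfl]
      exact (isHomogeneous_X ℂ t).C_mul z
    · simp only [gz, if_neg h]
      exact isHomogeneous_X ℂ i
  simpa using this

lemma sub_support {F : MvPolynomial (Fin 3) ℂ} (s t : Fin 3) (hts : t ≠ s) (z : ℂ) :
    ∀ m ∈ (aeval (gz s t z) F).support, m s = 0 := by
  intro m hm
  by_contra h
  have hs : s ∈ (aeval (gz s t z) F).vars :=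
    (mem_vars s).mpr ⟨m, hm, Finsupp.mem_support_iff.mpr h⟩
  obtain ⟨i, _, hsi⟩ := mem_vars_bind₁ (gz s t z) F hs
  by_cases hi : i = s
  · rw [show gz s t z i = C z * X t by simp [gz, hi]] at hsi
    have h2 := vars_mul (C z : MvPolynomial (Fin 3) ℂ) (X t) hsi
    rw [vars_C, vars_X, Finset.empty_union] at h2
    exact (Ne.symm hts) (Finset.mem_singleton.mp h2)
  · rw [show gz s t z i = X i by simp [gz, hi]] at hsi
    rw [vars_X] at hsi
    exact hi (Finset.mem_singleton.mp hsi).symm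

lemma binEval {G : MvPolynomial (Fin 3) ℂ} {d : ℕ} (hG : G.IsHomogeneous d)
    {s u v : Fin 3} (hus : u ≠ s) (hvs : v ≠ s) (huv : u ≠ v)
    (hcov : ∀ j : Fin 3, j = s ∨ j = u ∨ j = v)
    (hsup : ∀ m ∈ G.support, m s = 0) (y : Fin 3 → ℂ) :
    eval y G = ∑ k ∈ Finset.range (d + 1),
      coeff (Finsupp.single u (d - k) + Finsupp.single v k) G * y u ^ (d - k) * y v ^ k := by
  classical
  set mk : ℕ → (Fin 3 →₀ ℕ) := fun k => Finsupp.single u (d - k) + Finsupp.single v k with hmkdef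
  have hsuv : s ∉ ({u, v} : Finset (Fin 3)) := by
    simp [Ne.symm hus, Ne.symm hvs]
  have huvv : u ∉ ({v} : Finset (Fin 3)) := by simp [huv]
  have huniv : (Finset.univ : Finset (Fin 3)) = {s, u, v} := by
    ext j
    simp only [Finset.mem_univ, true_iff, Finset.mem_insert, Finset.mem_singleton]
    exact hcov j
  have hdeg : ∀ m ∈ G.support, m u + m v = d := by
    intro m hm
    have h1 : m.degree = d := by
      rw [Finsupp.degree_eq_weight_one]
      exact_mod_cast hG (MvPolynomial.mem_support_iff.mp hm)
    have h2 : m.degree = ∑ j : Fin 3, m j := by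
      rw [Finsupp.degree]
      exact Finset.sum_subset (Finset.subset_univ _)
        (fun i _ hi => Finsupp.notMem_support_iff.mp hi)
    rw [h2, huniv, Finset.sum_insert hsuv, Finset.sum_insert huvv,
      Finset.sum_singleton, hsup m hm, zero_add] at h1
    exact h1
  have hmkv : ∀ k, mk k v = k := by
    intro k
    simp [hmkdef, Finsupp.single_apply, huv]
  have hmkeq : ∀ m ∈ G.support, mk (m v) = m := by
    intro m hm
    ext j
    rcases hcov j with h | h | h <;> subst h
    · simp [hmkdef, Finsupp.single_apply, hus, hvs, Ne.symm hus, Ne.symm hvs, hsup m hm]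
    · have := hdeg m hm
      simp [hmkdef, Finsupp.single_apply, huv, Ne.symm huv]
      omega
    · simp [hmkdef, Finsupp.single_apply, huv, Ne.symm huv]
  rw [eval_eq']
  have step1 : ∑ k ∈ Finset.range (d + 1),
      coeff (mk k) G * y u ^ (d - k) * y v ^ k
      = ∑ k ∈ (Finset.range (d + 1)).filter (fun k => mk k ∈ G.support),
          coeff (mk k) G * y u ^ (d - k) * y v ^ k := by
    rw [Finset.sum_filter]
    refine Finset.sum_congr rfl fun k _ => ?_
    split_ifs with h
    · rfl
    · rw [MvPolynomial.notMem_support_iff.mp h, zero_mul, zero_mul]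
  rw [step1]
  refine Finset.sum_bij (fun m _ => m v) ?_ ?_ ?_ ?_
  · intro m hm
    simp only [Finset.mem_filter, Finset.mem_range]
    constructor
    · have := hdeg m hm; omega
    · rw [hmkeq m hm]; exact hm
  · intro m1 h1 m2 h2 hEq
    have hEq' : m1 v = m2 v := hEq
    rw [← hmkeq m1 h1, ← hmkeq m2 h2, hEq']
  · intro k hk
    simp only [Finset.mem_filter, Finset.mem_range] at hk
    exact ⟨mk k, hk.2, hmkv k⟩
  · intro m hm
    have hmu : m u = d - m v := by have := hdeg m hm; omega
    rw [hmkeq m hm]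
    rw [show (∏ i : Fin 3, y i ^ m i) = y s ^ m s * (y u ^ m u * y v ^ m v) by
      rw [huniv, Finset.prod_insert hsuv, Finset.prod_insert huvv, Finset.prod_singleton]]
    rw [hsup m hm, pow_zero, one_mul, hmu]
    ring

lemma sylM_map {R S : Type*} [CommRing R] [CommRing S] (φ : R →+* S) (d e : ℕ) (f g : ℕ → R) :
    (sylM d e f g).map φ = sylM d e (fun k => φ (f k)) (fun k => φ (g k)) := by
  ext i j
  simp only [Matrix.map_apply, sylM]
  split_ifs <;> simp

lemma map_Res {R S : Type*} [CommRing R] [CommRing S] (φ : R →+* S) (d e : ℕ) (f g : ℕ → R) :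
    φ (Res d e f g) = Res d e (fun k => φ (f k)) (fun k => φ (g k)) := by
  rw [Res, Res, RingHom.map_det, RingHom.mapMatrix_apply, sylM_map]

lemma lemA (d1 d2 : ℕ) (h1 : 1 ≤ d1) (h2 : 1 ≤ d2)
    (F1 F2 : MvPolynomial (Fin 3) ℂ) (hF1 : F1.IsHomogeneous d1) (hF2 : F2.IsHomogeneous d2)
    (s t : Fin 3) (hst : s ≠ t)
    (hZ : {z : ℂ | ∃ p : Projectivization ℂ (Fin 3 → ℂ),
        (MvPolynomial.eval p.rep F1 = 0 ∧ MvPolynomial.eval p.rep F2 = 0) ∧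
        p.rep t ≠ 0 ∧ p.rep s = z * p.rep t}.Infinite) :
    ∀ z : ℂ, resST d1 d2 F1 F2 s t z = 0 := by
  classical
  set u : Fin 3 := if s = 0 then 1 else 0 with hu
  set v : Fin 3 := if s = 2 then 1 else 2 with hv
  have key : ∀ s' t' : Fin 3, s' ≠ t' →
      (if s' = 0 then (1 : Fin 3) else 0) ≠ s' ∧ (if s' = 2 then (1 : Fin 3) else 2) ≠ s' ∧
      (if s' = 0 then (1 : Fin 3) else 0) ≠ (if s' = 2 then (1 : Fin 3) else 2) ∧
      (∀ j : Fin 3, j = s' ∨ j = (if s' = 0 then (1 : Fin 3) else 0)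
        ∨ j = (if s' = 2 then (1 : Fin 3) else 2)) ∧
      (t' = (if s' = 0 then (1 : Fin 3) else 0) ∨ t' = (if s' = 2 then (1 : Fin 3) else 2)) := by
    decide
  obtain ⟨hus, hvs, huv, hcov, htuv⟩ := key s t hst
  -- the polynomial whose evaluations give `resST`
  set P : Polynomial ℂ := Res d1 d2
      (fun i => MvPolynomial.coeff (Finsupp.single u (d1 - i) + Finsupp.single v i)
        (aeval (gP s t) (MvPolynomial.map Polynomial.C F1)))
      (fun i => MvPolynomial.coeff (Finsupp.single u (d2 - i) + Finsupp.single v i)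
        (aeval (gP s t) (MvPolynomial.map Polynomial.C F2))) with hP
  have hcoe : ∀ (z : ℂ) (F : MvPolynomial (Fin 3) ℂ) (m : Fin 3 →₀ ℕ),
      Polynomial.eval z (MvPolynomial.coeff m (aeval (gP s t) (MvPolynomial.map Polynomial.C F)))
      = MvPolynomial.coeff m (aeval (gz s t z) F) := by
    intro z F m
    rw [← map_subP s t z F, MvPolynomial.coeff_map]
    rfl
  have hres : ∀ z : ℂ, resST d1 d2 F1 F2 s t z = Polynomial.eval z P := by
    intro z
    have hmr := map_Res (Polynomial.evalRingHom z) d1 d2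
      (fun i => MvPolynomial.coeff (Finsupp.single u (d1 - i) + Finsupp.single v i)
        (aeval (gP s t) (MvPolynomial.map Polynomial.C F1)))
      (fun i => MvPolynomial.coeff (Finsupp.single u (d2 - i) + Finsupp.single v i)
        (aeval (gP s t) (MvPolynomial.map Polynomial.C F2)))
    simp only [Polynomial.coe_evalRingHom] at hmr
    rw [hP, hmr]
    simp only [resST, hcoe, gz, ← hu, ← hv]
    rfl
  have hzero : ∀ z ∈ {z : ℂ | ∃ p : Projectivization ℂ (Fin 3 → ℂ),
      (MvPolynomial.eval p.rep F1 = 0 ∧ MvPolynomial.eval p.rep F2 = 0) ∧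
      p.rep t ≠ 0 ∧ p.rep s = z * p.rep t}, resST d1 d2 F1 F2 s t z = 0 := by
    rintro z ⟨p, ⟨he1, he2⟩, hpt, hps⟩
    have hroot : ∀ (F : MvPolynomial (Fin 3) ℂ) (dF : ℕ), F.IsHomogeneous dF →
        MvPolynomial.eval p.rep F = 0 →
        ∑ k ∈ Finset.range (dF + 1),
          MvPolynomial.coeff (Finsupp.single u (dF - k) + Finsupp.single v k)
            (aeval (gz s t z) F) * p.rep u ^ (dF - k) * p.rep v ^ k = 0 := by
      intro F dF hF hev
      rw [← binEval (sub_homog hF s t z) hus hvs huv hcov (sub_support s t (Ne.symm hst) z) p.rep]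
      rw [eval_aeval']
      have hfun : (fun j => MvPolynomial.eval p.rep (gz s t z j)) = p.rep := by
        funext j
        by_cases hj : j = s
        · subst hj
          simp [gz, hps]
        · simp [gz, hj]
      rw [hfun, hev]
    have hab : ¬(p.rep u = 0 ∧ p.rep v = 0) := by
      rintro ⟨h1', h2'⟩
      rcases htuv with h | h <;> rw [h] at hpt
      · exact hpt h1'
      · exact hpt h2'
    simp only [resST]
    exact res_eq_zero h1 h2 _ _ _ _ hab (hroot F1 d1 hF1 he1) (hroot F2 d2 hF2 he2)
  have hP0 : P = 0 := by
    apply Polynomial.eq_zero_of_infinite_isRoot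
    apply hZ.mono
    intro z hz
    show Polynomial.IsRoot P z
    rw [Polynomial.IsRoot, ← hres z]
    exact hzero z hz
  intro z
  rw [hres z, hP0, Polynomial.eval_zero]

lemma lemB (S : Set (Projectivization ℂ (Fin 3 → ℂ))) (t : Fin 3)
    (hS : ∀ p ∈ S, p.rep t ≠ 0) (hSinf : S.Infinite) :
    ∃ s : Fin 3, s ≠ t ∧ {z : ℂ | ∃ p ∈ S, p.rep s = z * p.rep t}.Infinite := by
  classical
  set a : Fin 3 := if t = 0 then 1 else 0 with ha
  set b : Fin 3 := if t = 2 then 1 else 2 with hb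
  have key : ∀ t' : Fin 3, (if t' = 0 then (1 : Fin 3) else 0) ≠ t' ∧
      (if t' = 2 then (1 : Fin 3) else 2) ≠ t' ∧
      (∀ j : Fin 3, j = t' ∨ j = (if t' = 0 then (1 : Fin 3) else 0)
        ∨ j = (if t' = 2 then (1 : Fin 3) else 2)) := by decide
  obtain ⟨hat, hbt, hcov⟩ := key t
  by_contra hcon
  push_neg at hcon
  have hZa : {z : ℂ | ∃ p ∈ S, p.rep a = z * p.rep t}.Finite :=
    hcon a hat
  have hZb : {z : ℂ | ∃ p ∈ S, p.rep b = z * p.rep t}.Finite :=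
    hcon b hbt
  set φ : Projectivization ℂ (Fin 3 → ℂ) → ℂ × ℂ :=
    fun p => (p.rep a / p.rep t, p.rep b / p.rep t) with hφ
  have himg : φ '' S ⊆ {z : ℂ | ∃ p ∈ S, p.rep a = z * p.rep t}
      ×ˢ {z : ℂ | ∃ p ∈ S, p.rep b = z * p.rep t} := by
    rintro _ ⟨p, hp, rfl⟩
    have hpt := hS p hp
    exact ⟨⟨p, hp, (div_mul_cancel₀ _ hpt).symm⟩, ⟨p, hp, (div_mul_cancel₀ _ hpt).symm⟩⟩
  have hfin : (φ '' S).Finite := (hZa.prod hZb).subset himg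
  have hinj : Set.InjOn φ S := by
    intro p hp q hq hpq
    have hpt := hS p hp
    have hqt := hS q hq
    have h1 : p.rep a / p.rep t = q.rep a / q.rep t := congrArg Prod.fst hpq
    have h2 : p.rep b / p.rep t = q.rep b / q.rep t := congrArg Prod.snd hpq
    have h1' : p.rep a * q.rep t = q.rep a * p.rep t := (div_eq_div_iff hpt hqt).mp h1
    have h2' : p.rep b * q.rep t = q.rep b * p.rep t := (div_eq_div_iff hpt hqt).mp h2
    conv_lhs => rw [← p.mk_rep]
    conv_rhs => rw [← q.mk_rep]
    rw [Projectivization.mk_eq_mk_iff' ℂ p.rep q.rep p.rep_nonzero q.rep_nonzero]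
    refine ⟨p.rep t / q.rep t, ?_⟩
    funext j
    simp only [Pi.smul_apply, smul_eq_mul]
    rcases hcov j with h | h | h <;> subst h
    · exact div_mul_cancel₀ _ hqt
    · field_simp
      linear_combination -h1'
    · field_simp
      linear_combination -h2'
  exact hSinf (Set.Finite.of_finite_image hfin hinj)

end Stmt10Aux

/-- If the homogeneous ternary forms `F₁, F₂` of degrees `d₁, d₂ ≥ 1`
have infinitely many common zeros in the complex projective plane, then `Res^{s,t}`
vanishes identically (as a function of `z`) for some `s ≠ t`. -/


theorem stmt10 (d1 d2 : ℕ) (h1 : 1 ≤ d1) (h2 : 1 ≤ d2)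
    (F1 F2 : MvPolynomial (Fin 3) ℂ)
    (hF1 : F1.IsHomogeneous d1) (hF2 : F2.IsHomogeneous d2)
    (hinf : {p : Projectivization ℂ (Fin 3 → ℂ) |
        MvPolynomial.eval p.rep F1 = 0 ∧ MvPolynomial.eval p.rep F2 = 0}.Infinite) :
    ∃ s t : Fin 3, s ≠ t ∧ ∀ z : ℂ, resST d1 d2 F1 F2 s t z = 0 := by
  classical
  have step : ∀ t0 : Fin 3,
      {p : Projectivization ℂ (Fin 3 → ℂ) |
        (MvPolynomial.eval p.rep F1 = 0 ∧ MvPolynomial.eval p.rep F2 = 0)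
          ∧ p.rep t0 ≠ 0}.Infinite →
      ∃ s t : Fin 3, s ≠ t ∧ ∀ z : ℂ, resST d1 d2 F1 F2 s t z = 0 := by
    intro t0 ht0
    obtain ⟨s, hst, hZ⟩ := Stmt10Aux.lemB _ t0 (fun p hp => hp.2) ht0
    refine ⟨s, t0, hst, Stmt10Aux.lemA d1 d2 h1 h2 F1 F2 hF1 hF2 s t0 hst (hZ.mono ?_)⟩
    rintro z ⟨p, ⟨⟨he1, he2⟩, hpt⟩, hps⟩
    exact ⟨p, ⟨he1, he2⟩, hpt, hps⟩
  have hsub : {p : Projectivization ℂ (Fin 3 → ℂ) |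
        MvPolynomial.eval p.rep F1 = 0 ∧ MvPolynomial.eval p.rep F2 = 0}
      ⊆ {p : Projectivization ℂ (Fin 3 → ℂ) |
          (MvPolynomial.eval p.rep F1 = 0 ∧ MvPolynomial.eval p.rep F2 = 0) ∧ p.rep 0 ≠ 0}
        ∪ ({p : Projectivization ℂ (Fin 3 → ℂ) |
          (MvPolynomial.eval p.rep F1 = 0 ∧ MvPolynomial.eval p.rep F2 = 0) ∧ p.rep 1 ≠ 0}
        ∪ {p : Projectivization ℂ (Fin 3 → ℂ) |
          (MvPolynomial.eval p.rep F1 = 0 ∧ MvPolynomial.eval p.rep F2 = 0) ∧ p.rep 2 ≠ 0}) := by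
    intro p hp
    obtain ⟨i, hi⟩ := Function.ne_iff.mp p.rep_nonzero
    simp only [Pi.zero_apply] at hi
    fin_cases i
    · exact Or.inl ⟨hp, hi⟩
    · exact Or.inr (Or.inl ⟨hp, hi⟩)
    · exact Or.inr (Or.inr ⟨hp, hi⟩)
  have hU := hinf.mono hsub
  rcases Set.infinite_union.mp hU with h | h
  · exact step 0 h
  · rcases Set.infinite_union.mp h with h | h
    · exact step 1 h
    · exact step 2 h
end
end

section
/- Let m ≥ 3 and let A be a regular mth order 2-dimensional complex tensor. Then there exist λ ∈ ℂ and x ∈ ℂ² with x ≠ 0 such that Ax^{m-1} = λx and x_1² + x_2² = 0 if and only if P_m² + Q_m² = 0. -/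
open Finset

noncomputable section

/-- `P_m = b₁ - c₂ - b₃ + c₄ + b₅ - c₆ - ⋯` (signs cyclic with period four). -/
def Pm (m : ℕ) (A : Fin 2 → (Fin (m - 1) → Fin 2) → ℂ) : ℂ :=
  ∑ i ∈ Finset.Icc 1 m,
    if i % 4 = 1 then bCoeff A 0 (i - 1)
    else if i % 4 = 2 then -bCoeff A 1 (i - 1)
    else if i % 4 = 3 then -bCoeff A 0 (i - 1)
    else bCoeff A 1 (i - 1)

/-- `Q_m = c₁ + b₂ - c₃ - b₄ + c₅ + b₆ - ⋯` (signs cyclic with period four). -/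
def Qm (m : ℕ) (A : Fin 2 → (Fin (m - 1) → Fin 2) → ℂ) : ℂ :=
  ∑ i ∈ Finset.Icc 1 m,
    if i % 4 = 1 then bCoeff A 1 (i - 1)
    else if i % 4 = 2 then bCoeff A 0 (i - 1)
    else if i % 4 = 3 then -bCoeff A 1 (i - 1)
    else -bCoeff A 0 (i - 1)

lemma tApply_smul {m1 : ℕ} (A : Fin 2 → (Fin m1 → Fin 2) → ℂ) (c : ℂ) (x : Fin 2 → ℂ)
    (i : Fin 2) : tApply A (c • x) i = c ^ m1 * tApply A x i := by
  unfold tApply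
  rw [Finset.mul_sum]
  refine Finset.sum_congr rfl fun g _ => ?_
  have : ∏ j, (c • x) (g j) = c ^ m1 * ∏ j, x (g j) := by
    simp only [Pi.smul_apply, smul_eq_mul]
    rw [Finset.prod_mul_distrib, Finset.prod_const, Finset.card_univ, Fintype.card_fin]
  rw [this]; ring

lemma tApply_pair {m1 : ℕ} (A : Fin 2 → (Fin m1 → Fin 2) → ℂ) (z : ℂ) (i0 : Fin 2) :
    tApply A ![1, z] i0 = ∑ i ∈ Finset.range (m1 + 1), bCoeff A i0 i * z ^ i := by
  have h1 : tApply A ![1, z] i0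
      = ∑ g : Fin m1 → Fin 2, A i0 g * z ^ (univ.filter fun k => g k = 1).card := by
    refine Finset.sum_congr rfl fun g _ => ?_
    congr 1
    rw [← Finset.prod_filter_mul_prod_filter_not univ (fun k => g k = 1)]
    have e1 : ∀ k ∈ univ.filter (fun k : Fin m1 => g k = 1), ![(1:ℂ), z] (g k) = z := by
      intro k hk
      rw [Finset.mem_filter] at hk
      rw [hk.2]; simp
    have e2 : ∀ k ∈ univ.filter (fun k : Fin m1 => ¬ g k = 1), ![(1:ℂ), z] (g k) = 1 := by
      intro k hk
      rw [Finset.mem_filter] at hk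
      have : g k = 0 := by omega
      rw [this]; simp
    rw [Finset.prod_congr rfl e1, Finset.prod_congr rfl e2, Finset.prod_const,
      Finset.prod_const_one, mul_one]
  rw [h1, ← Finset.sum_fiberwise_of_maps_to
    (g := fun g : Fin m1 → Fin 2 => (univ.filter fun k => g k = 1).card)
    (t := Finset.range (m1 + 1)) (fun g _ => Finset.mem_range.mpr
      (Nat.lt_succ_of_le (le_trans (Finset.card_filter_le _ _) (by simp))))]
  refine Finset.sum_congr rfl fun i _ => ?_
  unfold bCoeff
  rw [Finset.sum_mul]
  refine Finset.sum_congr rfl fun g hg => ?_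
  rw [Finset.mem_filter] at hg
  rw [hg.2]

lemma I_pow_mod (k : ℕ) : Complex.I ^ k = Complex.I ^ (k % 4) := by
  conv_lhs => rw [← Nat.div_add_mod k 4]
  rw [pow_add, pow_mul, Complex.I_pow_four, one_pow, one_mul]

lemma negI_pow_mod (k : ℕ) : (-Complex.I) ^ k = (-Complex.I) ^ (k % 4) := by
  have h4 : (-Complex.I) ^ 4 = 1 := by
    rw [show ((4:ℕ) = 2*2) from rfl, pow_mul, neg_pow, Complex.I_sq]; norm_num
  conv_lhs => rw [← Nat.div_add_mod k 4]
  rw [pow_add, pow_mul, h4, one_pow, one_mul]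

lemma QP_sub {m : ℕ} (A : Fin 2 → (Fin (m-1) → Fin 2) → ℂ) :
    ∑ j ∈ Finset.range m, (bCoeff A 1 j - Complex.I * bCoeff A 0 j) * Complex.I ^ j
      = Qm m A - Complex.I * Pm m A := by
  unfold Qm Pm
  rw [← Finset.Ico_add_one_right_eq_Icc, Finset.sum_Ico_eq_sum_range, Finset.sum_Ico_eq_sum_range,
    Nat.add_sub_cancel, Finset.mul_sum, ← Finset.sum_sub_distrib]
  refine Finset.sum_congr rfl fun k _ => ?_
  have hI2 : Complex.I ^ 2 = -1 := Complex.I_sq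
  have hI3 : Complex.I ^ 3 = -Complex.I := by rw [pow_succ, hI2]; ring
  rw [Nat.add_sub_cancel_left, I_pow_mod]
  rcases show k % 4 = 0 ∨ k % 4 = 1 ∨ k % 4 = 2 ∨ k % 4 = 3 by omega with h|h|h|h
  · have h14 : (1+k) % 4 = 1 := by omega
    rw [h, h14]; norm_num
  · have h14 : (1+k) % 4 = 2 := by omega
    rw [h, h14]; norm_num
    linear_combination (-bCoeff A 0 k) * Complex.I_sq
  · have h14 : (1+k) % 4 = 3 := by omega
    rw [h, h14, hI2]; norm_num; ring
  · have h14 : (1+k) % 4 = 0 := by omega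
    rw [h, h14, hI3]; norm_num
    linear_combination (bCoeff A 0 k) * Complex.I_sq

lemma QP_add {m : ℕ} (A : Fin 2 → (Fin (m-1) → Fin 2) → ℂ) :
    ∑ j ∈ Finset.range m, (bCoeff A 1 j + Complex.I * bCoeff A 0 j) * (-Complex.I) ^ j
      = Qm m A + Complex.I * Pm m A := by
  unfold Qm Pm
  rw [← Finset.Ico_add_one_right_eq_Icc, Finset.sum_Ico_eq_sum_range, Finset.sum_Ico_eq_sum_range,
    Nat.add_sub_cancel, Finset.mul_sum, ← Finset.sum_add_distrib]
  refine Finset.sum_congr rfl fun k _ => ?_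
  have hI2 : (-Complex.I) ^ 2 = -1 := by rw [neg_pow, Complex.I_sq]; norm_num
  have hI3 : (-Complex.I) ^ 3 = Complex.I := by rw [pow_succ, hI2]; ring
  rw [Nat.add_sub_cancel_left, negI_pow_mod]
  rcases show k % 4 = 0 ∨ k % 4 = 1 ∨ k % 4 = 2 ∨ k % 4 = 3 by omega with h|h|h|h
  · have h14 : (1+k) % 4 = 1 := by omega
    rw [h, h14]; norm_num
  · have h14 : (1+k) % 4 = 2 := by omega
    rw [h, h14]; norm_num
    linear_combination (-bCoeff A 0 k) * Complex.I_sq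
  · have h14 : (1+k) % 4 = 3 := by omega
    rw [h, h14, hI2]; norm_num; ring
  · have h14 : (1+k) % 4 = 0 := by omega
    rw [h, h14, hI3]; norm_num
    linear_combination (bCoeff A 0 k) * Complex.I_sq


/-- For `m ≥ 3` and a regular `m`th order 2-dimensional complex tensor
`A`, the deficit system `A x^{m-1} = λ x`, `x₁² + x₂² = 0` has a nontrivial solution iff
`P_m² + Q_m² = 0`. -/
theorem stmt13 {m : ℕ} (hm : 3 ≤ m)
    (A : Fin 2 → (Fin (m - 1) → Fin 2) → ℂ) (hA : Regular A) :
    (∃ (lam : ℂ) (x : Fin 2 → ℂ), x ≠ 0 ∧ (∀ i, tApply A x i = lam * x i) ∧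
        x 0 ^ 2 + x 1 ^ 2 = 0) ↔
      Pm m A ^ 2 + Qm m A ^ 2 = 0 := by
  have hm1 : m - 1 + 1 = m := by omega
  have key : ∀ (z : ℂ) (i0 : Fin 2),
      tApply A ![1, z] i0 = ∑ j ∈ Finset.range m, bCoeff A i0 j * z ^ j := by
    intro z i0; rw [tApply_pair, hm1]
  have hSsub : tApply A ![1, Complex.I] 1 - Complex.I * tApply A ![1, Complex.I] 0
      = Qm m A - Complex.I * Pm m A := by
    rw [key, key, ← QP_sub A, Finset.mul_sum, ← Finset.sum_sub_distrib]
    exact Finset.sum_congr rfl fun j _ => by ring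
  have hSadd : tApply A ![1, -Complex.I] 1 + Complex.I * tApply A ![1, -Complex.I] 0
      = Qm m A + Complex.I * Pm m A := by
    rw [key, key, ← QP_add A, Finset.mul_sum, ← Finset.sum_add_distrib]
    exact Finset.sum_congr rfl fun j _ => by ring
  constructor
  · rintro ⟨lam, x, hx0, heig, hsq⟩
    have hx0ne : x 0 ≠ 0 := by
      intro h
      apply hx0
      have h1 : x 1 = 0 := by
        have h2 : x 1 ^ 2 = 0 := by rw [h] at hsq; simpa using hsq
        exact pow_eq_zero_iff (by norm_num) |>.mp h2
      funext i; fin_cases i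
      · exact h
      · exact h1
    set z := x 1 / x 0 with hz
    have hx1 : x 1 = x 0 * z := by rw [hz]; field_simp
    have hxz : x = x 0 • ![1, z] := by
      funext i; fin_cases i
      · simp
      · simpa using hx1
    have hz2 : z ^ 2 = -1 := by
      rw [hz, div_pow, div_eq_iff (pow_ne_zero 2 hx0ne)]
      linear_combination hsq
    have hS : ∀ i0 : Fin 2, x 0 ^ (m-1) * tApply A ![1, z] i0 = lam * x i0 := by
      intro i0; rw [← tApply_smul, ← hxz]; exact heig i0
    have hS1 : tApply A ![1, z] 1 = z * tApply A ![1, z] 0 := by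
      have h0 := hS 0
      have h1 := hS 1
      rw [hx1] at h1
      have h2 : x 0 ^ (m-1) * tApply A ![1,z] 1
          = x 0 ^ (m-1) * (z * tApply A ![1,z] 0) := by
        linear_combination h1 - z * h0
      exact mul_left_cancel₀ (pow_ne_zero _ hx0ne) h2
    have hzI : z = Complex.I ∨ z = -Complex.I := by
      have hfac : (z - Complex.I) * (z + Complex.I) = 0 := by
        linear_combination hz2 - Complex.I_sq
      rcases mul_eq_zero.mp hfac with h | h
      · exact Or.inl (sub_eq_zero.mp h)
      · exact Or.inr (eq_neg_of_add_eq_zero_left h)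
    rcases hzI with h | h
    · rw [h] at hS1
      have h0 : Qm m A - Complex.I * Pm m A = 0 := by
        rw [← hSsub, hS1]; ring
      linear_combination (Qm m A + Complex.I * Pm m A) * h0 + (Pm m A)^2 * Complex.I_sq
    · rw [h] at hS1
      have h0 : Qm m A + Complex.I * Pm m A = 0 := by
        rw [← hSadd, hS1]; ring
      linear_combination (Qm m A - Complex.I * Pm m A) * h0 + (Pm m A)^2 * Complex.I_sq
  · intro h
    have hfac : (Qm m A - Complex.I * Pm m A) * (Qm m A + Complex.I * Pm m A) = 0 := by
      linear_combination h - (Pm m A)^2 * Complex.I_sq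
    rcases mul_eq_zero.mp hfac with h0 | h0
    · refine ⟨tApply A ![1, Complex.I] 0, ![1, Complex.I], ?_, ?_, ?_⟩
      · intro hc; have := congrFun hc 0; simpa using this
      · have hd : tApply A ![1, Complex.I] 1 - Complex.I * tApply A ![1, Complex.I] 0 = 0 := by
          rw [hSsub, h0]
        intro i; fin_cases i
        · simp
        · show tApply A ![1, Complex.I] 1 = tApply A ![1, Complex.I] 0 * ![1, Complex.I] 1
          simp only [Matrix.cons_val_one, Matrix.head_cons, Matrix.cons_val_zero]
          linear_combination hd
      · norm_num [Complex.I_sq]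
    · refine ⟨tApply A ![1, -Complex.I] 0, ![1, -Complex.I], ?_, ?_, ?_⟩
      · intro hc; have := congrFun hc 0; simpa using this
      · have hd : tApply A ![1, -Complex.I] 1 + Complex.I * tApply A ![1, -Complex.I] 0 = 0 := by
          rw [hSadd, h0]
        intro i; fin_cases i
        · simp
        · show tApply A ![1, -Complex.I] 1 = tApply A ![1, -Complex.I] 0 * ![1, -Complex.I] 1
          simp only [Matrix.cons_val_one, Matrix.head_cons, Matrix.cons_val_zero]
          linear_combination hd
      · norm_num [Complex.I_sq]
end
end

section
/- Let m ≥ 3 and let A be an mth order 2-dimensional complex tensor. The vector x = (1, i) ∈ ℂ² (where i = √−1) satisfies Ax^{m-1} = λx for some λ ∈ ℂ if and only if P_m + i·Q_m = 0; likewise, x = (1, −i) satisfies Ax^{m-1} = λx for some λ ∈ ℂ if and only if P_m − i·Q_m = 0. -/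
open Finset

noncomputable section

lemma pow_mod4 {z : ℂ} (hz : z ^ 4 = 1) (j : ℕ) : z ^ j = z ^ (j % 4) := by
  conv_lhs => rw [← Nat.div_add_mod j 4]
  rw [pow_add, pow_mul, hz, one_pow, one_mul]

lemma I4 : Complex.I ^ 4 = 1 := by norm_num [pow_succ, Complex.I_mul_I]
lemma nI4 : (-Complex.I) ^ 4 = 1 := by norm_num [pow_succ, Complex.I_mul_I]

lemma tApply_eval {m1 : ℕ} (A : Fin 2 → (Fin m1 → Fin 2) → ℂ) (ε : ℂ) (i0 : Fin 2) :
    tApply A ![1, ε] i0 = ∑ j ∈ Finset.range (m1 + 1), bCoeff A i0 j * ε ^ j := by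
  have hprod : ∀ g : Fin m1 → Fin 2,
      (∏ j, (![1, ε]) (g j)) = ε ^ (univ.filter fun k => g k = 1).card := by
    intro g
    have : ∀ k : Fin m1, (![1, ε]) (g k) = if g k = 1 then ε else 1 := by
      intro k
      have h : g k = 0 ∨ g k = 1 := by omega
      rcases h with h | h <;> simp [h]
    rw [Finset.prod_congr rfl fun k _ => this k, Finset.prod_ite, Finset.prod_const,
      Finset.prod_const_one, mul_one]
  have hmap : ∀ g : Fin m1 → Fin 2, g ∈ (univ : Finset (Fin m1 → Fin 2)) →
      (univ.filter fun k => g k = 1).card ∈ Finset.range (m1 + 1) := by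
    intro g _
    simp only [Finset.mem_range, Nat.lt_succ_iff]
    exact (Finset.card_filter_le _ _).trans (by simp)
  rw [tApply, ← Finset.sum_fiberwise_of_maps_to hmap (fun g => A i0 g * ∏ j, (![1, ε]) (g j))]
  refine Finset.sum_congr rfl fun j _ => ?_
  rw [bCoeff, Finset.sum_mul]
  refine Finset.sum_congr rfl fun g hg => ?_
  rw [hprod g, (Finset.mem_filter.1 hg).2]

lemma PQ_plus {m : ℕ} (A : Fin 2 → (Fin (m - 1) → Fin 2) → ℂ) :
    Pm m A + Complex.I * Qm m A
      = ∑ j ∈ Finset.range m, (bCoeff A 0 j + Complex.I * bCoeff A 1 j) * Complex.I ^ j := by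
  rw [Pm, Qm, Finset.mul_sum, ← Finset.sum_add_distrib, ← Finset.Ico_add_one_right_eq_Icc,
    Finset.sum_Ico_eq_sum_range]
  refine Finset.sum_congr rfl fun j _ => ?_
  simp only [Nat.add_sub_cancel_left]
  rw [pow_mod4 I4 j]
  have h : j % 4 = 0 ∨ j % 4 = 1 ∨ j % 4 = 2 ∨ j % 4 = 3 := by omega
  rcases h with h | h | h | h <;> rw [h]
  · simp only [show (1 + j) % 4 = 1 by omega, Nat.reduceEqDiff, reduceIte]
    ring1
  · simp only [show (1 + j) % 4 = 2 by omega, Nat.reduceEqDiff, reduceIte]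
    linear_combination (-bCoeff A 1 j) * Complex.I_sq
  · simp only [show (1 + j) % 4 = 3 by omega, Nat.reduceEqDiff, reduceIte]
    linear_combination (-(bCoeff A 0 j + Complex.I * bCoeff A 1 j)) * Complex.I_sq
  · simp only [show (1 + j) % 4 = 0 by omega, Nat.reduceEqDiff, reduceIte]
    linear_combination (bCoeff A 1 j * (1 - Complex.I ^ 2) - Complex.I * bCoeff A 0 j) *
      Complex.I_sq

lemma PQ_minus {m : ℕ} (A : Fin 2 → (Fin (m - 1) → Fin 2) → ℂ) :
    Pm m A - Complex.I * Qm m A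
      = ∑ j ∈ Finset.range m, (bCoeff A 0 j - Complex.I * bCoeff A 1 j) * (-Complex.I) ^ j := by
  rw [Pm, Qm, Finset.mul_sum, ← Finset.sum_sub_distrib, ← Finset.Ico_add_one_right_eq_Icc,
    Finset.sum_Ico_eq_sum_range]
  refine Finset.sum_congr rfl fun j _ => ?_
  simp only [Nat.add_sub_cancel_left]
  rw [pow_mod4 nI4 j]
  have h : j % 4 = 0 ∨ j % 4 = 1 ∨ j % 4 = 2 ∨ j % 4 = 3 := by omega
  rcases h with h | h | h | h <;> rw [h]
  · simp only [show (1 + j) % 4 = 1 by omega, Nat.reduceEqDiff, reduceIte]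
    ring1
  · simp only [show (1 + j) % 4 = 2 by omega, Nat.reduceEqDiff, reduceIte]
    linear_combination (-bCoeff A 1 j) * Complex.I_sq
  · simp only [show (1 + j) % 4 = 3 by omega, Nat.reduceEqDiff, reduceIte]
    linear_combination (Complex.I * bCoeff A 1 j - bCoeff A 0 j) * Complex.I_sq
  · simp only [show (1 + j) % 4 = 0 by omega, Nat.reduceEqDiff, reduceIte]
    linear_combination (Complex.I * bCoeff A 0 j + bCoeff A 1 j * (1 - Complex.I ^ 2)) *
      Complex.I_sq

/-- For `m ≥ 3` and an `m`th order 2-dimensional complex tensor `A`: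
`x = (1, i)` is an eigenvector (`A x^{m-1} = λ x` for some `λ`) iff `P_m + i Q_m = 0`,
and `x = (1, -i)` is an eigenvector iff `P_m - i Q_m = 0`. -/
theorem stmt14 {m : ℕ} (hm : 3 ≤ m) (A : Fin 2 → (Fin (m - 1) → Fin 2) → ℂ) :
    ((∃ lam : ℂ, ∀ i, tApply A ![1, Complex.I] i = lam * ![1, Complex.I] i) ↔
        Pm m A + Complex.I * Qm m A = 0) ∧
    ((∃ lam : ℂ, ∀ i, tApply A ![1, -Complex.I] i = lam * ![1, -Complex.I] i) ↔
        Pm m A - Complex.I * Qm m A = 0) := by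
  have hm1 : m - 1 + 1 = m := by omega
  have e0 : tApply A ![1, Complex.I] 0 = ∑ j ∈ Finset.range m, bCoeff A 0 j * Complex.I ^ j := by
    rw [tApply_eval, hm1]
  have e1 : tApply A ![1, Complex.I] 1 = ∑ j ∈ Finset.range m, bCoeff A 1 j * Complex.I ^ j := by
    rw [tApply_eval, hm1]
  have f0 : tApply A ![1, -Complex.I] 0
      = ∑ j ∈ Finset.range m, bCoeff A 0 j * (-Complex.I) ^ j := by
    rw [tApply_eval, hm1]
  have f1 : tApply A ![1, -Complex.I] 1
      = ∑ j ∈ Finset.range m, bCoeff A 1 j * (-Complex.I) ^ j := by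
    rw [tApply_eval, hm1]
  have keyP : Pm m A + Complex.I * Qm m A
      = tApply A ![1, Complex.I] 0 + Complex.I * tApply A ![1, Complex.I] 1 := by
    rw [PQ_plus, e0, e1, Finset.mul_sum, ← Finset.sum_add_distrib]
    exact Finset.sum_congr rfl fun j _ => by ring
  have keyM : Pm m A - Complex.I * Qm m A
      = tApply A ![1, -Complex.I] 0 - Complex.I * tApply A ![1, -Complex.I] 1 := by
    rw [PQ_minus, f0, f1, Finset.mul_sum, ← Finset.sum_sub_distrib]
    exact Finset.sum_congr rfl fun j _ => by ring
  constructor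
  · rw [keyP]
    constructor
    · rintro ⟨lam, hl⟩
      have h0 := hl 0
      have h1 := hl 1
      simp only [Matrix.cons_val_zero, Matrix.cons_val_one, Matrix.head_cons, mul_one] at h0 h1
      rw [h0, h1]
      linear_combination lam * Complex.I_sq
    · intro h
      refine ⟨tApply A ![1, Complex.I] 0, fun i => ?_⟩
      fin_cases i
      · simp
      · show tApply A ![1, Complex.I] 1 = tApply A ![1, Complex.I] 0 * ![1, Complex.I] 1
        simp only [Matrix.cons_val_one, Matrix.head_cons, Matrix.cons_val_zero]
        linear_combination (-Complex.I) * h + tApply A ![1, Complex.I] 1 * Complex.I_sq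
  · rw [keyM]
    constructor
    · rintro ⟨lam, hl⟩
      have h0 := hl 0
      have h1 := hl 1
      simp only [Matrix.cons_val_zero, Matrix.cons_val_one, Matrix.head_cons, mul_one] at h0 h1
      rw [h0, h1]
      linear_combination lam * Complex.I_sq
    · intro h
      refine ⟨tApply A ![1, -Complex.I] 0, fun i => ?_⟩
      fin_cases i
      · simp
      · show tApply A ![1, -Complex.I] 1 = tApply A ![1, -Complex.I] 0 * ![1, -Complex.I] 1
        simp only [Matrix.cons_val_one, Matrix.head_cons, Matrix.cons_val_zero]
        linear_combination Complex.I * h + tApply A ![1, -Complex.I] 1 * Complex.I_sq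
end
end
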